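/- arXiv:2211.05252 — 6 statements merged into one kernel-verified Lean document; each statement's English description precedes it below -/
import Mathlib

section
/- Let p be an odd prime and let α₀ ∈ ℚ_p be an element not lying in the image of ℚ. Let (α_n), (b_n) be the sequences produced by Algorithm (3) applied to α₀ and let A_n, B_n be the convergents of the continued fraction [b_0, b_1, b_2, …]. Then for every n ≥ 0, B_n ≠ 0, B_{n+1} ≠ 0, and ‖α₀ − A_n/B_n‖_p = (‖B_n‖_p · ‖B_{n+1}‖_p)⁻¹. -/
/-- A rational number `a` is a `p`-adic fraction if `a * p^m` is an integer
for some natural number `m`, i.e. `a ∈ ℤ[1/p]`. -/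
def IsPadicFrac (p : ℕ) (a : ℚ) : Prop := ∃ (m : ℕ) (z : ℤ), a * (p : ℚ) ^ m = (z : ℚ)

/-- `b` is Browkin's integral floor `s α`: the unique `p`-adic fraction with
`|b| < p/2` and `‖α - b‖_p < 1`. -/
def IsIntFloor (p : ℕ) [Fact p.Prime] (α : ℚ_[p]) (b : ℚ) : Prop :=
  IsPadicFrac p b ∧ |b| < (p : ℚ) / 2 ∧ ‖α - (b : ℚ_[p])‖ < 1

/-- `b` is Browkin's fractional floor `t α`: the unique `p`-adic fraction with
`|b| < 1/2` and `‖α - b‖_p ≤ 1`. -/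
def IsFracFloor (p : ℕ) [Fact p.Prime] (α : ℚ_[p]) (b : ℚ) : Prop :=
  IsPadicFrac p b ∧ |b| < 1 / 2 ∧ ‖α - (b : ℚ_[p])‖ ≤ 1

/-- Algorithm (3): `b n = s (α n)` for even `n`, `b n = t (α n)` for odd `n`,
and `α (n + 1) = (α n - b n)⁻¹`. -/
def Alg3 (p : ℕ) [Fact p.Prime] (α : ℕ → ℚ_[p]) (b : ℕ → ℚ) : Prop :=
  (∀ n, Even n → IsIntFloor p (α n) (b n)) ∧
  (∀ n, Odd n → IsFracFloor p (α n) (b n)) ∧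
  ∀ n, α (n + 1) = (α n - (b n : ℚ_[p]))⁻¹

/-- shift sequence with a prescribed value at `-1`. -/
def shAux (c : ℚ) (f : ℕ → ℚ) : ℕ → ℚ
  | 0 => c
  | n+1 => f n

lemma padic_add_norm {p : ℕ} [Fact p.Prime] {x y : ℚ_[p]} (h : ‖y‖ < ‖x‖) :
    ‖x + y‖ = ‖x‖ := by
  rw [Padic.add_eq_max_of_ne (ne_of_gt h)]
  exact max_eq_left h.le

lemma padic_norm_eq_of_sub_lt {p : ℕ} [Fact p.Prime] {x y : ℚ_[p]} (h : ‖x - y‖ < ‖x‖) :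
    ‖y‖ = ‖x‖ := by
  have h1 : y = x + -(x - y) := by ring
  rw [h1, padic_add_norm (by rwa [norm_neg])]


/-- For `α₀ ∈ ℚ_p` not rational, with Algorithm (3) sequences `(α n)`, `(b n)` and
convergents `A n / B n` (where `A (-1) = 1, A 0 = b 0, B (-1) = 0, B 0 = 1`, the
`-1`-indexed values being absorbed in the stated values of `A 0, A 1, B 0, B 1`),
we have `‖α₀ - A n / B n‖_p = (‖B n‖_p · ‖B (n+1)‖_p)⁻¹` for all `n ≥ 0`. -/

theorem stmt_12 (p : ℕ) [Fact p.Prime] (hp : p ≠ 2)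
    (α₀ : ℚ_[p]) (hirr : ∀ q : ℚ, α₀ ≠ (q : ℚ_[p]))
    (α : ℕ → ℚ_[p]) (b : ℕ → ℚ) (h0 : α 0 = α₀) (halg : Alg3 p α b)
    (A B : ℕ → ℚ)
    (hA0 : A 0 = b 0) (hA1 : A 1 = b 1 * b 0 + 1)
    (hA : ∀ n, A (n + 2) = b (n + 2) * A (n + 1) + A n)
    (hB0 : B 0 = 1) (hB1 : B 1 = b 1)
    (hB : ∀ n, B (n + 2) = b (n + 2) * B (n + 1) + B n) :
    ∀ n : ℕ, B n ≠ 0 ∧ B (n + 1) ≠ 0 ∧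
      ‖α₀ - ((A n / B n : ℚ) : ℚ_[p])‖ =
        (‖((B n : ℚ) : ℚ_[p])‖ * ‖((B (n + 1) : ℚ) : ℚ_[p])‖)⁻¹ := by
  obtain ⟨hev, hod, hrec⟩ := halg
  subst h0
  -- every α n is irrational
  have hirr' : ∀ n (q : ℚ), α n ≠ (q : ℚ_[p]) := by
    intro n
    induction n with
    | zero => exact hirr
    | succ n ih =>
      intro q hq
      have hne : α n - (b n : ℚ_[p]) ≠ 0 := sub_ne_zero.mpr (ih (b n))
      have h1 : α (n+1) ≠ 0 := by rw [hrec n]; exact inv_ne_zero hne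
      have hq0 : q ≠ 0 := by
        rintro rfl; exact h1 (by simpa using hq)
      have h2 : α n - (b n : ℚ_[p]) = ((q : ℚ_[p]))⁻¹ := by
        have h3 : (α n - (b n : ℚ_[p]))⁻¹ = (q : ℚ_[p]) := by rw [← hrec n]; exact hq
        rw [← h3, inv_inv]
      have : α n = ((b n + q⁻¹ : ℚ) : ℚ_[p]) := by
        push_cast
        rw [← h2]; ring
      exact ih _ this
  have hne : ∀ n, α n - (b n : ℚ_[p]) ≠ 0 := fun n => sub_ne_zero.mpr (hirr' n (b n))
  have K : ∀ n, α (n+1) * (α n - (b n : ℚ_[p])) = 1 := fun n => by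
    rw [hrec n]; exact inv_mul_cancel₀ (hne n)
  -- norm facts about α and b
  have hα_odd : ∀ n, Even n → 1 < ‖α (n+1)‖ := by
    intro n hn
    have h1 := (hev n hn).2.2
    have h2 : 0 < ‖α n - (b n : ℚ_[p])‖ := norm_pos_iff.mpr (hne n)
    rw [hrec n, norm_inv]
    exact (one_lt_inv₀ h2).mpr h1
  have hα_even : ∀ n, Odd n → 1 ≤ ‖α (n+1)‖ := by
    intro n hn
    have h1 := (hod n hn).2.2
    have h2 : 0 < ‖α n - (b n : ℚ_[p])‖ := norm_pos_iff.mpr (hne n)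
    rw [hrec n, norm_inv]
    exact (one_le_inv₀ h2).mpr h1
  have hbα : ∀ n, ‖((b (n+1) : ℚ) : ℚ_[p])‖ = ‖α (n+1)‖ ∧ 1 ≤ ‖α (n+1)‖ ∧
      (Odd (n+1) → 1 < ‖α (n+1)‖) := by
    intro n
    rcases Nat.even_or_odd (n+1) with hpar | hpar
    · have hn : Odd n := by
        rcases Nat.even_or_odd n with h | h
        · exact absurd (Even.add_one h) (by simpa using hpar)
        · exact h
      have h1 : 1 ≤ ‖α (n+1)‖ := hα_even n hn
      have h2 := (hev (n+1) hpar).2.2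
      refine ⟨padic_norm_eq_of_sub_lt (lt_of_lt_of_le h2 h1), h1, ?_⟩
      intro h; exact absurd hpar (by simpa using h)
    · have hn : Even n := by
        rcases Nat.even_or_odd n with h | h
        · exact h
        · exact absurd (Odd.add_one h) (by simpa using hpar)
      have h1 : 1 < ‖α (n+1)‖ := hα_odd n hn
      have h2 := (hod (n+1) hpar).2.2
      exact ⟨padic_norm_eq_of_sub_lt (lt_of_le_of_lt h2 h1), h1.le, fun _ => h1⟩
  have hb_ge : ∀ n, 1 ≤ ‖((b (n+1) : ℚ) : ℚ_[p])‖ := fun n =>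
    (hbα n).1 ▸ (hbα n).2.1
  have hb_gt : ∀ n, Odd (n+1) → 1 < ‖((b (n+1) : ℚ) : ℚ_[p])‖ := fun n h =>
    (hbα n).1 ▸ (hbα n).2.2 h
  have hprod : ∀ n, 1 < ‖((b (n+1) : ℚ) : ℚ_[p])‖ * ‖((b (n+2) : ℚ) : ℚ_[p])‖ := by
    intro n
    rcases Nat.even_or_odd (n+1) with hpar | hpar
    · have h1 := hb_gt (n+1) (Even.add_one hpar)
      nlinarith [hb_ge n, hb_ge (n+1)]
    · have h1 := hb_gt n hpar
      nlinarith [hb_ge n, hb_ge (n+1)]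
  -- recurrences with shifted sequences
  have hBrec : ∀ n, B (n+1) = b (n+1) * B n + shAux 0 B n := by
    intro n
    cases n with
    | zero => simp [shAux, hB1, hB0]
    | succ m => simpa [shAux] using hB m
  have hArec : ∀ n, A (n+1) = b (n+1) * A n + shAux 1 A n := by
    intro n
    cases n with
    | zero => simp [shAux, hA1, hA0]
    | succ m => simpa [shAux] using hA m
  -- norms of B
  have hBmain : ∀ n, 1 ≤ ‖((B n : ℚ) : ℚ_[p])‖ ∧
      ‖((B (n+1) : ℚ) : ℚ_[p])‖ = ‖((b (n+1) : ℚ) : ℚ_[p])‖ * ‖((B n : ℚ) : ℚ_[p])‖ := by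
    intro n
    induction n with
    | zero => simp [hB0, hB1]
    | succ m ih =>
      obtain ⟨ih1, ih2⟩ := ih
      have h1 : (1:ℝ) ≤ ‖((B (m+1) : ℚ) : ℚ_[p])‖ := by
        rw [ih2]; nlinarith [hb_ge m]
      refine ⟨h1, ?_⟩
      have hc : ((B (m+2) : ℚ) : ℚ_[p]) =
          ((b (m+2) : ℚ) : ℚ_[p]) * ((B (m+1) : ℚ) : ℚ_[p]) + ((B m : ℚ) : ℚ_[p]) := by
        rw [hB m]; push_cast; ring
      rw [hc, padic_add_norm, norm_mul]
      rw [norm_mul, ih2]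
      nlinarith [hprod m, hb_ge m, hb_ge (m+1)]
  have hB_ge : ∀ n, 1 ≤ ‖((B n : ℚ) : ℚ_[p])‖ := fun n => (hBmain n).1
  have hB_ne : ∀ n, B n ≠ 0 := by
    intro n h
    have := hB_ge n
    rw [h] at this
    simp at this
    linarith
  -- norm of the "true" denominator
  have hDnorm : ∀ n, ‖α (n+1) * ((B n : ℚ) : ℚ_[p]) + ((shAux 0 B n : ℚ) : ℚ_[p])‖ =
      ‖((B (n+1) : ℚ) : ℚ_[p])‖ := by
    intro n
    have hα : ‖α (n+1)‖ = ‖((b (n+1) : ℚ) : ℚ_[p])‖ := ((hbα n).1).symm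
    cases n with
    | zero =>
      simp only [shAux, hB0]
      push_cast
      rw [add_zero, norm_mul, hα, (hBmain 0).2]
      simp [hB0]
    | succ m =>
      have hsh : ((shAux 0 B (m+1) : ℚ) : ℚ_[p]) = ((B m : ℚ) : ℚ_[p]) := rfl
      rw [hsh, padic_add_norm, norm_mul, hα, (hBmain (m+1)).2]
      rw [norm_mul, hα, (hBmain m).2]
      nlinarith [hprod m, hB_ge m, hb_ge m, hb_ge (m+1)]
  -- the key identity
  have hI : ∀ n, α 0 * (α (n+1) * ((B n : ℚ) : ℚ_[p]) + ((shAux 0 B n : ℚ) : ℚ_[p])) =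
      α (n+1) * ((A n : ℚ) : ℚ_[p]) + ((shAux 1 A n : ℚ) : ℚ_[p]) := by
    intro n
    induction n with
    | zero =>
      simp only [shAux, hB0, hA0]
      push_cast
      linear_combination K 0
    | succ m ih =>
      have hBc : ((B (m+1) : ℚ) : ℚ_[p]) =
          ((b (m+1) : ℚ) : ℚ_[p]) * ((B m : ℚ) : ℚ_[p]) + ((shAux 0 B m : ℚ) : ℚ_[p]) := by
        rw [hBrec m]; push_cast; ring
      have hAc : ((A (m+1) : ℚ) : ℚ_[p]) =
          ((b (m+1) : ℚ) : ℚ_[p]) * ((A m : ℚ) : ℚ_[p]) + ((shAux 1 A m : ℚ) : ℚ_[p]) := by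
        rw [hArec m]; push_cast; ring
      have hshB : ((shAux 0 B (m+1) : ℚ) : ℚ_[p]) = ((B m : ℚ) : ℚ_[p]) := rfl
      have hshA : ((shAux 1 A (m+1) : ℚ) : ℚ_[p]) = ((A m : ℚ) : ℚ_[p]) := rfl
      rw [hshB, hshA, hBc, hAc]
      linear_combination (α (m+2)) * ih +
        (((A m : ℚ) : ℚ_[p]) - α 0 * ((B m : ℚ) : ℚ_[p])) * K (m+1)
  -- determinant identity
  have hdet : ∀ n, (A n) * (shAux 0 B n) - (shAux 1 A n) * (B n) = (-1 : ℚ)^(n+1) := by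
    intro n
    induction n with
    | zero => norm_num [shAux, hA0, hB0]
    | succ m ih =>
      have e1 : shAux 0 B (m+1) = B m := rfl
      have e2 : shAux 1 A (m+1) = A m := rfl
      rw [e1, e2]
      linear_combination (-1 : ℚ) * ih + (B m) * hArec m - (A m) * hBrec m
  -- conclusion
  intro n
  refine ⟨hB_ne n, hB_ne (n+1), ?_⟩
  have hBc0 : ((B n : ℚ) : ℚ_[p]) ≠ 0 := Rat.cast_ne_zero.mpr (hB_ne n)
  have hD0 : α (n+1) * ((B n : ℚ) : ℚ_[p]) + ((shAux 0 B n : ℚ) : ℚ_[p]) ≠ 0 := by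
    intro h
    have := hDnorm n
    rw [h, norm_zero] at this
    have := hB_ge (n+1)
    linarith
  have hdc : ((A n : ℚ) : ℚ_[p]) * ((shAux 0 B n : ℚ) : ℚ_[p]) -
      ((shAux 1 A n : ℚ) : ℚ_[p]) * ((B n : ℚ) : ℚ_[p]) = (-1 : ℚ_[p])^(n+1) := by
    have := hdet n
    have := congrArg (fun q : ℚ => (q : ℚ_[p])) this
    push_cast at this
    convert this using 2 <;> push_cast <;> ring
  have key2 : (α 0 * ((B n : ℚ) : ℚ_[p]) - ((A n : ℚ) : ℚ_[p])) *
      (α (n+1) * ((B n : ℚ) : ℚ_[p]) + ((shAux 0 B n : ℚ) : ℚ_[p])) = (-1 : ℚ_[p])^n := by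
    linear_combination ((B n : ℚ) : ℚ_[p]) * hI n - hdc
  have hAB : ((A n / B n : ℚ) : ℚ_[p]) = ((A n : ℚ) : ℚ_[p]) / ((B n : ℚ) : ℚ_[p]) := by
    push_cast; ring
  have hfin : (α 0 - ((A n / B n : ℚ) : ℚ_[p])) *
      (((B n : ℚ) : ℚ_[p]) * (α (n+1) * ((B n : ℚ) : ℚ_[p]) + ((shAux 0 B n : ℚ) : ℚ_[p])))
      = (-1 : ℚ_[p])^n := by
    have e : ((A n : ℚ) : ℚ_[p]) / ((B n : ℚ) : ℚ_[p]) *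
        (((B n : ℚ) : ℚ_[p]) * (α (n+1) * ((B n : ℚ) : ℚ_[p]) + ((shAux 0 B n : ℚ) : ℚ_[p])))
        = ((A n : ℚ) : ℚ_[p]) *
          (α (n+1) * ((B n : ℚ) : ℚ_[p]) + ((shAux 0 B n : ℚ) : ℚ_[p])) := by
      rw [← mul_assoc, div_mul_cancel₀ _ hBc0]
    rw [hAB, sub_mul, e]
    linear_combination key2
  have hnorm := congrArg (fun x : ℚ_[p] => ‖x‖) hfin
  simp only [norm_mul, norm_pow, norm_neg, norm_one, one_pow] at hnorm
  rw [hDnorm n] at hnorm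
  exact eq_inv_of_mul_eq_one_left hnorm
end

section
/- Let p be an odd prime and let α₀ ∈ ℚ_p be a quadratic irrational with conjugate ᾱ₀. Let (α_n), (b_n) be the sequences produced by Browkin's first algorithm applied to α₀, and assume the expansion is periodic. Then the expansion is purely periodic if and only if ‖α₀‖_p > 1 and ‖ᾱ₀‖_p < 1. -/
/-- Browkin's first algorithm: `b n = s (α n)` for all `n`, and
`α (n + 1) = (α n - b n)⁻¹`. -/
def Alg1 (p : ℕ) [Fact p.Prime] (α : ℕ → ℚ_[p]) (b : ℕ → ℚ) : Prop :=
  (∀ n, IsIntFloor p (α n) (b n)) ∧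
  ∀ n, α (n + 1) = (α n - (b n : ℚ_[p]))⁻¹

section BrowkinAux

variable {p : ℕ} [Fact p.Prime]

private lemma brow_one_lt_p : (1:ℝ) < p := by
  exact_mod_cast (Fact.out : p.Prime).one_lt

private lemma brow_norm_le_pinv {z : ℚ_[p]} (h : ‖z‖ < 1) : ‖z‖ ≤ (p:ℝ)⁻¹ := by
  rcases eq_or_ne z 0 with rfl | hz
  · simp
  · have h1 : (1:ℝ) < p := brow_one_lt_p
    rw [Padic.norm_eq_zpow_neg_valuation hz] at h ⊢
    have h0 : (p:ℝ) ^ (-z.valuation) < (p:ℝ) ^ (0:ℤ) := by simpa using h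
    have hlt : -z.valuation < 0 := (zpow_lt_zpow_iff_right₀ h1).mp h0
    calc (p:ℝ) ^ (-z.valuation) ≤ (p:ℝ) ^ (-1:ℤ) :=
          zpow_le_zpow_right₀ h1.le (by omega)
    _ = (p:ℝ)⁻¹ := by simp

private lemma brow_norm_ge_p {z : ℚ_[p]} (h : 1 < ‖z‖) : (p:ℝ) ≤ ‖z‖ := by
  have hz : z ≠ 0 := by
    rintro rfl; simp at h; linarith
  have h1 : (1:ℝ) < p := brow_one_lt_p
  rw [Padic.norm_eq_zpow_neg_valuation hz] at h ⊢
  have h0 : (p:ℝ) ^ (0:ℤ) < (p:ℝ) ^ (-z.valuation) := by simpa using h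
  have hlt : 0 < -z.valuation := (zpow_lt_zpow_iff_right₀ h1).mp h0
  calc (p:ℝ) = (p:ℝ) ^ (1:ℤ) := by simp
  _ ≤ (p:ℝ) ^ (-z.valuation) := zpow_le_zpow_right₀ h1.le (by omega)

private lemma brow_norm_add_eq {x y : ℚ_[p]} (h : ‖y‖ < ‖x‖) : ‖x + y‖ = ‖x‖ := by
  rw [Padic.add_eq_max_of_ne (ne_of_gt h)]
  exact max_eq_left h.le

private lemma brow_norm_sub_le (x y z : ℚ_[p]) :
    ‖x - y‖ ≤ max ‖x - z‖ ‖y - z‖ := by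
  have : x - y = (x - z) + -(y - z) := by ring
  rw [this]
  refine le_trans (Padic.nonarchimedean _ _) ?_
  simp only [norm_neg]
  exact le_rfl

/-- Core contraction lemma: two orbits of the same inverse-shift recursion with the
same partial quotients agree. -/
private lemma brow_contract (x y : ℕ → ℚ_[p]) (c : ℕ → ℚ)
    (hx : ∀ n, x (n+1) = (x n - (c n : ℚ_[p]))⁻¹)
    (hy : ∀ n, y (n+1) = (y n - (c n : ℚ_[p]))⁻¹)
    (hxc : ∀ n, x n ≠ (c n : ℚ_[p]))
    (hyc : ∀ n, y n ≠ (c n : ℚ_[p]))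
    (hx1 : ∀ n, ‖x n - (c n : ℚ_[p])‖ < 1)
    (hy1 : ∀ n, ‖y n - (c n : ℚ_[p])‖ < 1) : x 0 = y 0 := by
  by_contra hne
  have h1 : (1:ℝ) < p := brow_one_lt_p
  have hp0 : (0:ℝ) < p := lt_trans one_pos h1
  have hd0 : 0 < ‖x 0 - y 0‖ := by
    rw [norm_pos_iff]; exact sub_ne_zero.mpr hne
  have key : ∀ n, ‖x 0 - y 0‖ * ((p:ℝ)^2)^n ≤ ‖x n - y n‖ := by
    intro n
    induction n with
    | zero => simp
    | succ n ih =>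
      have hax : x n - (c n : ℚ_[p]) ≠ 0 := sub_ne_zero.mpr (hxc n)
      have hay : y n - (c n : ℚ_[p]) ≠ 0 := sub_ne_zero.mpr (hyc n)
      have hdiff : x (n+1) - y (n+1)
          = -(x n - y n) * (x n - (c n : ℚ_[p]))⁻¹ * (y n - (c n : ℚ_[p]))⁻¹ := by
        rw [hx n, hy n]
        field_simp
        try ring
      have hnx : (p:ℝ) ≤ ‖(x n - (c n : ℚ_[p]))⁻¹‖ := by
        rw [norm_inv]
        calc (p:ℝ) = ((p:ℝ)⁻¹)⁻¹ := by simp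
        _ ≤ ‖x n - (c n : ℚ_[p])‖⁻¹ := by
            apply inv_anti₀ (norm_pos_iff.mpr hax)
            exact brow_norm_le_pinv (hx1 n)
      have hny : (p:ℝ) ≤ ‖(y n - (c n : ℚ_[p]))⁻¹‖ := by
        rw [norm_inv]
        calc (p:ℝ) = ((p:ℝ)⁻¹)⁻¹ := by simp
        _ ≤ ‖y n - (c n : ℚ_[p])‖⁻¹ := by
            apply inv_anti₀ (norm_pos_iff.mpr hay)
            exact brow_norm_le_pinv (hy1 n)
      have hpos : 0 ≤ ‖x n - y n‖ := norm_nonneg _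
      calc ‖x 0 - y 0‖ * ((p:ℝ)^2)^(n+1)
          = (‖x 0 - y 0‖ * ((p:ℝ)^2)^n) * ((p:ℝ) * (p:ℝ)) := by ring
        _ ≤ ‖x n - y n‖ * ((p:ℝ) * (p:ℝ)) := by
            apply mul_le_mul_of_nonneg_right ih
            positivity
        _ ≤ ‖x n - y n‖ * (‖(x n - (c n : ℚ_[p]))⁻¹‖ * ‖(y n - (c n : ℚ_[p]))⁻¹‖) :=
            mul_le_mul_of_nonneg_left
              (mul_le_mul hnx hny hp0.le (norm_nonneg _)) hpos
        _ = ‖x (n+1) - y (n+1)‖ := by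
            rw [hdiff, norm_mul, norm_mul, norm_neg]
            try ring
  have bound : ∀ n, ‖x n - y n‖ < 1 := by
    intro n
    refine lt_of_le_of_lt (brow_norm_sub_le (x n) (y n) ((c n : ℚ_[p]))) ?_
    exact max_lt (hx1 n) (hy1 n)
  obtain ⟨n, hn⟩ := pow_unbounded_of_one_lt (‖x 0 - y 0‖)⁻¹
    (show (1:ℝ) < (p:ℝ)^2 by nlinarith)
  have : 1 < ‖x 0 - y 0‖ * ((p:ℝ)^2)^n := by
    have h' := mul_lt_mul_of_pos_left hn hd0
    rwa [mul_inv_cancel₀ (ne_of_gt hd0)] at h'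
  have := lt_of_lt_of_le this (key n)
  exact absurd (bound n) (by linarith)

/-- Uniqueness of `p`-adic fractions below `p/2` in a residue class. -/
private lemma brow_floor_unique {a b : ℚ} (ha : IsPadicFrac p a) (hb : IsPadicFrac p b)
    (ha2 : |a| < (p:ℚ)/2) (hb2 : |b| < (p:ℚ)/2)
    (h : ‖((a - b : ℚ) : ℚ_[p])‖ < 1) : a = b := by
  obtain ⟨m1, z1, hz1⟩ := ha
  obtain ⟨m2, z2, hz2⟩ := hb
  set M := m1 + m2 with hM
  have hpQ : (0:ℚ) < p := by exact_mod_cast (Fact.out : p.Prime).pos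
  have hcalc : (a - b) * (p:ℚ)^M = ((z1 * p^m2 - z2 * p^m1 : ℤ) : ℚ) := by
    push_cast
    rw [hM]
    calc (a - b) * (p:ℚ)^(m1+m2) = (a * p^m1) * p^m2 - (b * p^m2) * p^m1 := by ring
    _ = (z1:ℚ) * p^m2 - (z2:ℚ) * p^m1 := by rw [hz1, hz2]
  set w : ℤ := z1 * p^m2 - z2 * p^m1 with hw
  have hnorm : ‖((w:ℤ) : ℚ_[p])‖ ≤ (p:ℝ) ^ (-(M+1:ℕ) : ℤ) := by
    have hwc : ((w:ℤ) : ℚ_[p]) = ((a - b : ℚ) : ℚ_[p]) * ((p:ℚ_[p]))^M := by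
      have h' := congrArg (fun t : ℚ => (t : ℚ_[p])) hcalc
      push_cast at h' ⊢
      exact h'.symm
    rw [hwc, norm_mul]
    have h1 : ‖((a - b : ℚ) : ℚ_[p])‖ ≤ (p:ℝ)⁻¹ := brow_norm_le_pinv h
    have h2 : ‖((p:ℚ_[p]))^M‖ = (p:ℝ) ^ (-(M:ℕ) : ℤ) := Padic.norm_p_pow M
    rw [h2]
    have hppos : (0:ℝ) < (p:ℝ) ^ (-(M:ℕ) : ℤ) := by
      apply zpow_pos; exact_mod_cast (Fact.out : p.Prime).pos
    calc ‖((a - b : ℚ) : ℚ_[p])‖ * (p:ℝ) ^ (-(M:ℕ) : ℤ)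
        ≤ (p:ℝ)⁻¹ * (p:ℝ) ^ (-(M:ℕ) : ℤ) := by
          apply mul_le_mul_of_nonneg_right h1 hppos.le
      _ = (p:ℝ) ^ (-(M+1:ℕ) : ℤ) := by
          rw [← zpow_neg_one]
          rw [← zpow_add₀ (show (p:ℝ) ≠ 0 from by
            exact_mod_cast (Fact.out : p.Prime).pos.ne')]
          congr 1
          push_cast
          ring
  have hdvd : ((p:ℤ)^(M+1)) ∣ w := (Padic.norm_int_le_pow_iff_dvd w (M+1)).mp hnorm
  obtain ⟨w', hw'⟩ := hdvd
  have hfact : a - b = (p:ℚ) * (w' : ℚ) := by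
    have hpM : ((p:ℚ))^M ≠ 0 := pow_ne_zero M (ne_of_gt hpQ)
    apply mul_right_cancel₀ hpM
    rw [hcalc]
    have hwQ : ((w:ℤ):ℚ) = (((p:ℤ)^(M+1) * w' : ℤ) : ℚ) := by exact_mod_cast congrArg (fun t : ℤ => (t:ℚ)) hw'
    rw [hwQ]
    push_cast
    ring
  have habs : |a - b| < (p:ℚ) := by
    calc |a - b| ≤ |a| + |b| := abs_sub _ _
    _ < (p:ℚ)/2 + (p:ℚ)/2 := by linarith [ha2, hb2]
    _ = (p:ℚ) := by ring
  have : |(w' : ℚ)| < 1 := by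
    rw [hfact, abs_mul, abs_of_pos hpQ] at habs
    by_contra hc
    push_neg at hc
    nlinarith
  have hw0 : w' = 0 := by
    have h' : |w'| < 1 := by exact_mod_cast this
    exact Int.abs_lt_one_iff.mp h'
  rw [hw0] at hfact
  push_cast at hfact
  linarith

end BrowkinAux

/-- For `α₀` a quadratic irrational (with `α₀² = r·α₀ + s`, conjugate `r - α₀`)
whose Browkin I expansion is periodic, the expansion is purely periodic iff
`‖α₀‖_p > 1` and `‖ᾱ₀‖_p < 1`. -/
theorem stmt_13 (p : ℕ) [Fact p.Prime] (hp : p ≠ 2)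
    (α₀ : ℚ_[p]) (hirr : ∀ q : ℚ, α₀ ≠ (q : ℚ_[p]))
    (r s : ℚ) (hquad : α₀ ^ 2 = (r : ℚ_[p]) * α₀ + (s : ℚ_[p]))
    (α : ℕ → ℚ_[p]) (b : ℕ → ℚ) (h0 : α 0 = α₀) (halg : Alg1 p α b)
    (hper : ∃ h k : ℕ, 1 ≤ k ∧ ∀ n, h ≤ n → b (n + k) = b n) :
    (∃ k : ℕ, 1 ≤ k ∧ ∀ n, b (n + k) = b n) ↔
      (1 < ‖α₀‖ ∧ ‖(r : ℚ_[p]) - α₀‖ < 1) := by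
  obtain ⟨hfloor, hrec⟩ := halg
  have h1 : (1:ℝ) < p := brow_one_lt_p
  have hp0 : (0:ℝ) < p := lt_trans one_pos h1
  -- irrationality of all α n
  have hirrn : ∀ n, ∀ q : ℚ, α n ≠ (q : ℚ_[p]) := by
    intro n
    induction n with
    | zero => rw [h0]; exact hirr
    | succ n ih =>
      intro q hq
      have hne : α n - (b n : ℚ_[p]) ≠ 0 := sub_ne_zero.mpr (ih (b n))
      rw [hrec n] at hq
      have hq0 : q ≠ 0 := by
        rintro rfl
        simp only [Rat.cast_zero] at hq
        exact hne (inv_eq_zero.mp hq)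
      have : α n = ((b n + q⁻¹ : ℚ) : ℚ_[p]) := by
        have hqc : ((q:ℚ_[p]))⁻¹ = α n - (b n : ℚ_[p]) := by
          rw [← hq, inv_inv]
        push_cast
        rw [hqc]
        ring
      exact ih _ this
  have hneb : ∀ n, α n ≠ ((b n : ℚ) : ℚ_[p]) := fun n => hirrn n (b n)
  have hlt : ∀ n, ‖α n - ((b n : ℚ) : ℚ_[p])‖ < 1 := fun n => (hfloor n).2.2
  have hgt : ∀ n, 1 < ‖α (n+1)‖ := by
    intro n
    rw [hrec n, norm_inv]
    have hpos : 0 < ‖α n - ((b n : ℚ) : ℚ_[p])‖ :=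
      norm_pos_iff.mpr (sub_ne_zero.mpr (hneb n))
    exact (one_lt_inv₀ hpos).mpr (hlt n)
  -- conjugate sequence
  set β : ℕ → ℚ_[p] := fun n =>
    Nat.rec ((r : ℚ_[p]) - α₀) (fun m βm => (βm - ((b m : ℚ) : ℚ_[p]))⁻¹) n with hβ
  have hβ0 : β 0 = (r : ℚ_[p]) - α₀ := rfl
  have hβs : ∀ n, β (n+1) = (β n - ((b n : ℚ) : ℚ_[p]))⁻¹ := fun n => rfl
  -- conjugation properties
  have conj : ∀ n, (∀ q : ℚ, β n ≠ (q : ℚ_[p])) ∧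
      ∃ u v : ℚ, α n + β n = (u : ℚ_[p]) ∧ α n * β n = (v : ℚ_[p]) := by
    intro n
    induction n with
    | zero =>
      refine ⟨?_, r, -s, ?_, ?_⟩
      · intro q hq
        rw [hβ0] at hq
        have : α₀ = ((r - q : ℚ) : ℚ_[p]) := by push_cast; rw [← hq]; ring
        exact hirr _ this
      · rw [h0, hβ0]; ring
      · rw [h0, hβ0]
        have : α₀ * ((r:ℚ_[p]) - α₀) = (r:ℚ_[p]) * α₀ + (s:ℚ_[p]) - α₀^2 - (s:ℚ_[p]) := by
          ring
        rw [this, ← hquad]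
        push_cast
        ring
    | succ n ih =>
      obtain ⟨hirrβ, u, v, hu, hv⟩ := ih
      have hAne : α n - ((b n : ℚ) : ℚ_[p]) ≠ 0 := sub_ne_zero.mpr (hneb n)
      have hBne : β n - ((b n : ℚ) : ℚ_[p]) ≠ 0 := sub_ne_zero.mpr (hirrβ (b n))
      have hABprod : (α n - ((b n : ℚ) : ℚ_[p])) * (β n - ((b n : ℚ) : ℚ_[p]))
          = ((v - b n * u + (b n)^2 : ℚ) : ℚ_[p]) := by
        have : (α n - ((b n : ℚ) : ℚ_[p])) * (β n - ((b n : ℚ) : ℚ_[p]))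
            = α n * β n - ((b n : ℚ) : ℚ_[p]) * (α n + β n) + ((b n : ℚ) : ℚ_[p])^2 := by
          ring
        rw [this, hu, hv]
        push_cast
        ring
      have hVne : (v - b n * u + (b n)^2 : ℚ) ≠ 0 := by
        intro hz
        rw [hz] at hABprod
        simp at hABprod
        rcases hABprod with h' | h'
        · exact hAne h'
        · exact hBne h'
      refine ⟨?_, (u - 2 * b n) * (v - b n * u + (b n)^2)⁻¹, (v - b n * u + (b n)^2)⁻¹, ?_, ?_⟩
      · intro q hq
        rw [hβs n] at hq
        have hq0 : q ≠ 0 := by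
          rintro rfl
          simp only [Rat.cast_zero] at hq
          exact hBne (inv_eq_zero.mp hq)
        have : β n = ((b n + q⁻¹ : ℚ) : ℚ_[p]) := by
          have hqc : ((q:ℚ_[p]))⁻¹ = β n - ((b n : ℚ) : ℚ_[p]) := by
            rw [← hq, inv_inv]
          push_cast
          rw [hqc]
          ring
        exact hirrβ _ this
      · have hnum : α n - ((b n : ℚ) : ℚ_[p]) + (β n - ((b n : ℚ) : ℚ_[p]))
            = ((u - 2 * b n : ℚ) : ℚ_[p]) := by
          have hx : α n - ((b n : ℚ) : ℚ_[p]) + (β n - ((b n : ℚ) : ℚ_[p]))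
              = (α n + β n) - 2 * ((b n : ℚ) : ℚ_[p]) := by ring
          rw [hx, hu]
          push_cast
          ring
        rw [hrec n, hβs n, inv_add_inv hAne hBne, hnum, hABprod, Rat.cast_mul,
          Rat.cast_inv, div_eq_mul_inv]
      · rw [hrec n, hβs n, ← mul_inv, hABprod, Rat.cast_inv]
  -- transfer of equality to conjugates
  have htrans : ∀ m k : ℕ, α m = α (m + k) → β m = β (m + k) := by
    intro m k heq
    obtain ⟨_, u, v, hu, hv⟩ := conj m
    obtain ⟨_, u', v', hu', hv'⟩ := conj (m + k)
    have e1 : α m * ((u : ℚ_[p]) - α m) = (v : ℚ_[p]) := by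
      have : β m = (u : ℚ_[p]) - α m := by rw [← hu]; ring
      rw [← this, hv]
    have e2 : α m * ((u' : ℚ_[p]) - α m) = (v' : ℚ_[p]) := by
      have hβm : β (m + k) = (u' : ℚ_[p]) - α m := by rw [← hu', ← heq]; ring
      rw [← hβm, heq, hv']
    have huu : u = u' := by
      by_contra hne
      have hsub : ((u - u' : ℚ) : ℚ_[p]) * α m = ((v - v' : ℚ) : ℚ_[p]) := by
        push_cast
        linear_combination e1 - e2
      have huu' : ((u - u' : ℚ) : ℚ_[p]) ≠ 0 := by
        exact_mod_cast sub_ne_zero.mpr hne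
      have : α m = (((v - v') / (u - u') : ℚ) : ℚ_[p]) := by
        rw [Rat.cast_div, eq_div_iff huu']
        linear_combination hsub
      exact hirrn m _ this
    have : β m = (u : ℚ_[p]) - α m := by rw [← hu]; ring
    rw [this, huu, heq, ← hu']
    ring
  -- shifted periodicity forces equality of complete quotients
  have shiftEq : ∀ m k : ℕ, 1 ≤ k → (∀ n, m ≤ n → b (n + k) = b n) → α m = α (m + k) := by
    intro m k _ hbper
    have := brow_contract (fun j => α (m + j)) (fun j => α (m + j + k)) (fun j => b (m + j))
      (fun j => by exact hrec (m + j))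
      (fun j => by
        show α (m + (j+1) + k) = (α (m + j + k) - ((b (m + j) : ℚ) : ℚ_[p]))⁻¹
        have hidx : m + (j+1) + k = (m + j + k) + 1 := by omega
        rw [hidx, hrec (m + j + k), hbper (m + j) (by omega)])
      (fun j => hneb (m + j))
      (fun j => by
        show α (m + j + k) ≠ ((b (m + j) : ℚ) : ℚ_[p])
        have h' := hneb (m + j + k)
        rwa [hbper (m + j) (by omega)] at h')
      (fun j => hlt (m + j))
      (fun j => by
        show ‖α (m + j + k) - ((b (m + j) : ℚ) : ℚ_[p])‖ < 1
        have h' := hlt (m + j + k)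
        rwa [hbper (m + j) (by omega)] at h')
    simpa using this
  constructor
  · -- purely periodic ⇒ norms
    rintro ⟨k, hk, hb⟩
    have hαper : ∀ m, α m = α (m + k) := fun m => shiftEq m k hk (fun n _ => hb n)
    have hαk : 1 < ‖α k‖ := by
      obtain ⟨k', rfl⟩ : ∃ k', k = k' + 1 := ⟨k - 1, by omega⟩
      exact hgt k'
    have hα0 : 1 < ‖α₀‖ := by
      rw [← h0]
      have := hαper 0
      rw [show (0 + k) = k by omega] at this
      rw [this]
      exact hαk
    refine ⟨hα0, ?_⟩
    have hαgt : ∀ n, 1 < ‖α n‖ := by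
      intro n
      cases n with
      | zero => rw [h0]; exact hα0
      | succ n => exact hgt n
    have hbp : ∀ n, (p:ℝ) ≤ ‖((b n : ℚ) : ℚ_[p])‖ := by
      intro n
      have heq : ‖((b n : ℚ) : ℚ_[p])‖ = ‖α n‖ := by
        have : ((b n : ℚ) : ℚ_[p]) = α n + -(α n - ((b n : ℚ) : ℚ_[p])) := by ring
        rw [this, brow_norm_add_eq]
        rw [norm_neg]
        exact lt_trans (hlt n) (hαgt n)
      rw [heq]
      exact brow_norm_ge_p (hαgt n)
    by_contra hc
    have hcon : 1 ≤ ‖β 0‖ := by rw [hβ0]; exact not_lt.mp hc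
    have hβper : ∀ m, β m = β (m + k) := fun m => htrans m k (hαper m)
    have hirrβ : ∀ n, ∀ q : ℚ, β n ≠ (q : ℚ_[p]) := fun n => (conj n).1
    have hβbne : ∀ n, β n - ((b n : ℚ) : ℚ_[p]) ≠ 0 :=
      fun n => sub_ne_zero.mpr (hirrβ n (b n))
    have onestep : ∀ j, 1 ≤ ‖β (j+1)‖ → (p:ℝ) ≤ ‖β j‖ := by
      intro j hj
      have hβj1ne : β (j+1) ≠ 0 := by
        rw [hβs j]; exact inv_ne_zero (hβbne j)
      have hβbval : ‖β j - ((b j : ℚ) : ℚ_[p])‖ = ‖β (j+1)‖⁻¹ := by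
        rw [hβs j, norm_inv, inv_inv]
      have hle1 : ‖β j - ((b j : ℚ) : ℚ_[p])‖ ≤ 1 := by
        rw [hβbval]
        exact inv_le_one_of_one_le₀ hj
      have : ‖β j‖ = ‖((b j : ℚ) : ℚ_[p])‖ := by
        have : β j = ((b j : ℚ) : ℚ_[p]) + (β j - ((b j : ℚ) : ℚ_[p])) := by ring
        rw [this, brow_norm_add_eq]
        exact lt_of_le_of_lt hle1 (lt_of_lt_of_le h1 (hbp j))
      rw [this]
      exact hbp j
    have down : ∀ d j, 1 ≤ ‖β (j + d)‖ → 1 ≤ ‖β j‖ := by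
      intro d
      induction d with
      | zero => intro j hj; exact hj
      | succ d ih =>
        intro j hj
        apply ih j
        have : 1 ≤ ‖β ((j + d) + 1)‖ := by
          rw [show (j + d) + 1 = j + (d + 1) by omega]
          exact hj
        exact le_trans h1.le (onestep (j + d) this)
    have hmult : ∀ m : ℕ, β 0 = β (m * k) := by
      intro m
      induction m with
      | zero => simp
      | succ m ih =>
        rw [ih, show (m + 1) * k = m * k + k by ring]
        exact hβper (m * k)
    have allβ1 : ∀ n, 1 ≤ ‖β n‖ := by
      intro n
      apply down (n * k - n) n
      have hnk : n ≤ n * k := Nat.le_mul_of_pos_right n (by omega)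
      rw [show n + (n * k - n) = n * k by omega]
      rw [← hmult n]
      exact hcon
    have hβb : ∀ n, ‖β n - ((b n : ℚ) : ℚ_[p])‖ < 1 := by
      intro n
      have hβbval : ‖β n - ((b n : ℚ) : ℚ_[p])‖ = ‖β (n+1)‖⁻¹ := by
        rw [hβs n, norm_inv, inv_inv]
      rw [hβbval]
      have h2 : (p:ℝ) ≤ ‖β (n+1)‖ := onestep (n+1) (allβ1 (n+2))
      calc ‖β (n+1)‖⁻¹ ≤ (p:ℝ)⁻¹ := inv_anti₀ hp0 h2
      _ < 1 := inv_lt_one_of_one_lt₀ h1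
    have heq := brow_contract α β b hrec hβs hneb
      (fun n => fun hq => hβbne n (sub_eq_zero.mpr hq)) hlt hβb
    rw [h0, hβ0] at heq
    have : α₀ = ((r / 2 : ℚ) : ℚ_[p]) := by
      push_cast
      rw [eq_div_iff (two_ne_zero)]
      linear_combination heq
    exact hirr _ this
  · -- norms ⇒ purely periodic
    rintro ⟨hα0, hβ0n⟩
    obtain ⟨h, k, hk, hb⟩ := hper
    refine ⟨k, hk, ?_⟩
    have hαgt : ∀ n, 1 < ‖α n‖ := by
      intro n
      cases n with
      | zero => rw [h0]; exact hα0
      | succ n => exact hgt n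
    have hbp : ∀ n, (p:ℝ) ≤ ‖((b n : ℚ) : ℚ_[p])‖ := by
      intro n
      have heq : ‖((b n : ℚ) : ℚ_[p])‖ = ‖α n‖ := by
        have : ((b n : ℚ) : ℚ_[p]) = α n + -(α n - ((b n : ℚ) : ℚ_[p])) := by ring
        rw [this, brow_norm_add_eq]
        rw [norm_neg]
        exact lt_trans (hlt n) (hαgt n)
      rw [heq]
      exact brow_norm_ge_p (hαgt n)
    have hirrβ : ∀ n, ∀ q : ℚ, β n ≠ (q : ℚ_[p]) := fun n => (conj n).1
    have hβbne : ∀ n, β n - ((b n : ℚ) : ℚ_[p]) ≠ 0 :=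
      fun n => sub_ne_zero.mpr (hirrβ n (b n))
    have βsmall : ∀ n, ‖β n‖ ≤ (p:ℝ)⁻¹ := by
      intro n
      induction n with
      | zero => rw [hβ0]; exact brow_norm_le_pinv hβ0n
      | succ n ih =>
        rw [hβs n, norm_inv]
        have hbig : ‖β n - ((b n : ℚ) : ℚ_[p])‖ = ‖((b n : ℚ) : ℚ_[p])‖ := by
          have : β n - ((b n : ℚ) : ℚ_[p]) = -((b n : ℚ) : ℚ_[p]) + β n := by ring
          rw [this, brow_norm_add_eq, norm_neg]
          rw [norm_neg]
          calc ‖β n‖ ≤ (p:ℝ)⁻¹ := ih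
          _ < (p:ℝ) := by
              calc (p:ℝ)⁻¹ < 1 := by rw [inv_lt_one_iff₀]; right; exact h1
              _ < p := h1
          _ ≤ ‖((b n : ℚ) : ℚ_[p])‖ := hbp n
        rw [hbig]
        exact inv_anti₀ hp0 (hbp n)
    have step : ∀ m, (∀ n, m + 1 ≤ n → b (n + k) = b n) → ∀ n, m ≤ n → b (n + k) = b n := by
      intro m hm
      have hα : α (m+1) = α ((m+1) + k) := shiftEq (m+1) k hk hm
      have hβeq : β (m+1) = β ((m+1) + k) := htrans (m+1) k hα
      have hβ1ne : β (m+1) ≠ 0 := by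
        rw [hβs m]; exact inv_ne_zero (hβbne m)
      have e1 : ((b m : ℚ) : ℚ_[p]) = β m - (β (m+1))⁻¹ := by
        rw [hβs m, inv_inv]
        ring
      have e2 : ((b (m+k) : ℚ) : ℚ_[p]) = β (m+k) - (β ((m+1) + k))⁻¹ := by
        have : β ((m+1) + k) = β ((m+k) + 1) := by
          rw [show (m+1) + k = (m+k) + 1 by omega]
        rw [this, hβs (m+k), inv_inv]
        ring
      have hdiff : ‖((b m - b (m+k) : ℚ) : ℚ_[p])‖ < 1 := by
        have hc : ((b m - b (m+k) : ℚ) : ℚ_[p]) = β m - β (m+k) := by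
          push_cast
          rw [e1, e2, ← hβeq]
          ring
        rw [hc]
        refine lt_of_le_of_lt (brow_norm_sub_le (β m) (β (m+k)) 0) ?_
        simp only [sub_zero]
        apply max_lt
        · exact lt_of_le_of_lt (βsmall m) (by rw [inv_lt_one_iff₀]; right; exact h1)
        · exact lt_of_le_of_lt (βsmall (m+k)) (by rw [inv_lt_one_iff₀]; right; exact h1)
      have hbmk : b m = b (m+k) :=
        brow_floor_unique (hfloor m).1 (hfloor (m+k)).1 (hfloor m).2.1 (hfloor (m+k)).2.1 hdiff
      intro n hn
      rcases eq_or_lt_of_le hn with rfl | hlt'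
      · exact hbmk.symm
      · exact hm n (by omega)
    have all : ∀ i, ∀ n, h - i ≤ n → b (n + k) = b n := by
      intro i
      induction i with
      | zero => intro n hn; exact hb n (by omega)
      | succ i ih =>
        exact step (h - (i+1)) (fun n hn => ih n (by omega))
    exact fun n => all h n (by omega)
end

section
/- Let p be an odd prime and let α₀ ∈ ℚ_p be a quadratic irrational with conjugate ᾱ₀. Let (α_n), (b_n) be the sequences produced by Browkin's second algorithm applied to α₀, and assume the expansion is periodic. If the expansion is purely periodic, then ‖α₀‖_p = 1 and ‖ᾱ₀‖_p < 1. -/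
/-- Browkin's second algorithm: `b n = s (α n)` for even `n`; for odd `n`,
`b n = t (α n)` if `‖α n - t (α n)‖_p = 1`, and `b n = t (α n) - sign (t (α n))`
if `‖α n - t (α n)‖_p < 1`; and `α (n + 1) = (α n - b n)⁻¹`. -/
def Alg2 (p : ℕ) [Fact p.Prime] (α : ℕ → ℚ_[p]) (b : ℕ → ℚ) : Prop :=
  (∀ n, Even n → IsIntFloor p (α n) (b n)) ∧
  (∀ n, Odd n → ∃ c : ℚ, IsFracFloor p (α n) c ∧
    ((‖α n - (c : ℚ_[p])‖ = 1 ∧ b n = c) ∨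
     (‖α n - (c : ℚ_[p])‖ < 1 ∧
       b n = c - (if 0 < c then 1 else if c < 0 then -1 else 0)))) ∧
  ∀ n, α (n + 1) = (α n - (b n : ℚ_[p]))⁻¹

/- ----------------- auxiliary material ----------------- -/

private lemma padic_one_lt (p : ℕ) [Fact p.Prime] : (1:ℝ) < p := by
  exact_mod_cast (Fact.out : p.Prime).one_lt

private lemma padic_norm_le_inv {p : ℕ} [Fact p.Prime] {x : ℚ_[p]} (h : ‖x‖ < 1) :
    ‖x‖ ≤ (p:ℝ)⁻¹ := by
  have := (Padic.norm_lt_pow_iff_norm_le_pow_sub_one x 0).mp (by simpa using h)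
  simpa using this

/-- if `‖x‖ < ‖a‖` then `‖a - x‖ = ‖a‖`. -/
private lemma padic_sub_norm_left {p : ℕ} [Fact p.Prime] {a x : ℚ_[p]} (h : ‖x‖ < ‖a‖) :
    ‖a - x‖ = ‖a‖ := by
  have hne : ‖a‖ ≠ ‖(-x : ℚ_[p])‖ := by rw [norm_neg]; exact ne_of_gt h
  rw [sub_eq_add_neg, Padic.add_eq_max_of_ne hne, norm_neg, max_eq_left (le_of_lt h)]

private lemma padic_sub_norm_right {p : ℕ} [Fact p.Prime] {a x : ℚ_[p]} (h : ‖x‖ < ‖a‖) :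
    ‖x - a‖ = ‖a‖ := by
  rw [norm_sub_rev]; exact padic_sub_norm_left h

private lemma padic_sub_norm_le {p : ℕ} [Fact p.Prime] {a x : ℚ_[p]} (ha : ‖a‖ ≤ 1)
    (hx : ‖x‖ ≤ 1) : ‖a - x‖ ≤ 1 := by
  have := Padic.nonarchimedean a (-x)
  rw [← sub_eq_add_neg] at this
  rw [norm_neg] at this
  exact le_trans this (max_le ha hx)

private lemma geom_escape {g : ℝ} (hg : 1 < g) (f : ℕ → ℝ) (h0 : 0 < f 0)
    (hstep : ∀ m, g * f m ≤ f (m + 1)) (hbd : ∀ m, f m ≤ 1) : False := by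
  have hgpos : (0:ℝ) < g := lt_trans one_pos hg
  have hgrow : ∀ m, g ^ m * f 0 ≤ f m := by
    intro m
    induction m with
    | zero => simp
    | succ m ih =>
      calc g ^ (m+1) * f 0 = g * (g ^ m * f 0) := by ring
        _ ≤ g * f m := mul_le_mul_of_nonneg_left ih (le_of_lt hgpos)
        _ ≤ f (m+1) := hstep m
  obtain ⟨m, hm⟩ := pow_unbounded_of_one_lt ((f 0)⁻¹) hg
  have h1 : (1:ℝ) < g ^ m * f 0 := by
    have := mul_lt_mul_of_pos_right hm h0
    rwa [inv_mul_cancel₀ (ne_of_gt h0)] at this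
  linarith [hgrow m, hbd m]

/-- The conjugate sequence following the same recursion. -/
private noncomputable def conjSeq (p : ℕ) [Fact p.Prime] (b : ℕ → ℚ) (β0 : ℚ_[p]) : ℕ → ℚ_[p] :=
  fun n => Nat.rec β0 (fun n ih => (ih - (b n : ℚ_[p]))⁻¹) n

private lemma conjSeq_zero (p : ℕ) [Fact p.Prime] (b : ℕ → ℚ) (β0 : ℚ_[p]) :
    conjSeq p b β0 0 = β0 := rfl

private lemma conjSeq_succ (p : ℕ) [Fact p.Prime] (b : ℕ → ℚ) (β0 : ℚ_[p]) (n : ℕ) :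
    conjSeq p b β0 (n + 1) = (conjSeq p b β0 n - (b n : ℚ_[p]))⁻¹ := rfl

/-- For `α₀` a quadratic irrational (with `α₀² = r·α₀ + s`, conjugate `r - α₀`)
whose Browkin II expansion is periodic: if the expansion is purely periodic,
then `‖α₀‖_p = 1` and `‖ᾱ₀‖_p < 1`. -/
theorem stmt_14 (p : ℕ) [Fact p.Prime] (hp : p ≠ 2)
    (α₀ : ℚ_[p]) (hirr : ∀ q : ℚ, α₀ ≠ (q : ℚ_[p]))
    (r s : ℚ) (hquad : α₀ ^ 2 = (r : ℚ_[p]) * α₀ + (s : ℚ_[p]))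
    (α : ℕ → ℚ_[p]) (b : ℕ → ℚ) (h0 : α 0 = α₀) (halg : Alg2 p α b)
    (hper : ∃ h k : ℕ, 1 ≤ k ∧ ∀ n, h ≤ n → b (n + k) = b n)
    (hpure : ∃ k : ℕ, 1 ≤ k ∧ ∀ n, b (n + k) = b n) :
    ‖α₀‖ = 1 ∧ ‖(r : ℚ_[p]) - α₀‖ < 1 := by
  clear hper hp
  obtain ⟨hint, hfrac, hrec⟩ := halg
  obtain ⟨k, hk1, hkper⟩ := hpure
  have honep : (1:ℝ) < p := padic_one_lt p
  have hppos : (0:ℝ) < p := lt_trans one_pos honep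
  set K := k + k with hKdef
  have hK : ∀ n, b (n + K) = b n := by
    intro n; rw [hKdef, ← add_assoc, hkper, hkper]
  have hKeven : Even K := ⟨k, rfl⟩
  have hKpos : K ≠ 0 := by omega
  -- every complete quotient is irrational
  have hirr' : ∀ n (q : ℚ), α n ≠ (q : ℚ_[p]) := by
    intro n
    induction n with
    | zero => intro q; rw [h0]; exact hirr q
    | succ n ih =>
      intro q hq
      rw [hrec n] at hq
      by_cases hq0 : q = 0
      · subst hq0
        rw [Rat.cast_zero, inv_eq_zero, sub_eq_zero] at hq
        exact ih (b n) hq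
      · have h1 : α n - (b n : ℚ_[p]) = ((q⁻¹ : ℚ) : ℚ_[p]) := by
          rw [Rat.cast_inv, ← hq, inv_inv]
        have h2 : α n = ((b n + q⁻¹ : ℚ) : ℚ_[p]) := by
          push_cast at h1 ⊢
          linear_combination h1
        exact ih _ h2
  have hne : ∀ n (q : ℚ), α n - (q : ℚ_[p]) ≠ 0 := fun n q h => hirr' n q (sub_eq_zero.mp h)
  have hrecn : ∀ n, ‖α (n+1)‖ = ‖α n - (b n : ℚ_[p])‖⁻¹ := fun n => by rw [hrec n, norm_inv]
  have hesub : ∀ n, Even n → ‖α n - (b n : ℚ_[p])‖ < 1 := fun n h => (hint n h).2.2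
  -- odd complete quotients have norm > 1
  have hodd1 : ∀ n, Odd n → 1 < ‖α n‖ := by
    rintro n ⟨m, hm⟩
    have hmn : n = 2*m + 1 := by omega
    subst hmn
    rw [hrecn]
    have h1 := hesub (2*m) (even_two_mul m)
    have h2 : (0:ℝ) < ‖α (2*m) - (b (2*m) : ℚ_[p])‖ :=
      norm_pos_iff.mpr (hne (2*m) (b (2*m)))
    exact one_lt_inv₀ h2 |>.mpr h1
  -- odd steps: ‖α n - b n‖ = 1 and ‖b n‖ = ‖α n‖
  have hodd2 : ∀ n, Odd n → ‖α n - ((b n : ℚ) : ℚ_[p])‖ = 1 ∧ ‖((b n : ℚ) : ℚ_[p])‖ = ‖α n‖ := by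
    intro n hn
    have hα := hodd1 n hn
    obtain ⟨c, ⟨_, _, hc1⟩, hcase⟩ := hfrac n hn
    have hcnorm : ‖((c : ℚ) : ℚ_[p])‖ = ‖α n‖ := by
      have hlt : ‖α n - ((c : ℚ) : ℚ_[p])‖ < ‖α n‖ := lt_of_le_of_lt hc1 hα
      have hrw : ((c : ℚ) : ℚ_[p]) = α n - (α n - ((c : ℚ) : ℚ_[p])) := by ring
      rw [hrw]
      exact padic_sub_norm_left hlt
    rcases hcase with ⟨hc2, hb⟩ | ⟨hc2, hb⟩
    · rw [hb]; exact ⟨hc2, hcnorm⟩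
    · -- c ≠ 0 since ‖c‖ = ‖α n‖ > 1
      have hcne : c ≠ 0 := by
        intro h
        rw [h] at hcnorm
        simp at hcnorm
        rw [← hcnorm] at hα
        linarith
      have main : ∀ σ : ℚ, ‖((σ : ℚ) : ℚ_[p])‖ = 1 → b n = c - σ →
          ‖α n - ((b n : ℚ) : ℚ_[p])‖ = 1 ∧ ‖((b n : ℚ) : ℚ_[p])‖ = ‖α n‖ := by
        intro σ hσ hbn
        have hcast : ((b n : ℚ) : ℚ_[p]) = ((c : ℚ) : ℚ_[p]) - ((σ : ℚ) : ℚ_[p]) := by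
          rw [hbn]; push_cast; ring
        constructor
        · have hrw : α n - ((b n : ℚ) : ℚ_[p]) =
              (α n - ((c : ℚ) : ℚ_[p])) + ((σ : ℚ) : ℚ_[p]) := by
            rw [hcast]; ring
          rw [hrw, Padic.add_eq_max_of_ne (by rw [hσ]; exact ne_of_lt hc2), hσ,
            max_eq_right (le_of_lt hc2)]
        · rw [hcast, padic_sub_norm_left (by rw [hσ, hcnorm]; exact hα), hcnorm]
      rcases lt_trichotomy 0 c with hpos | hzero | hneg
      · refine main 1 (by norm_num) ?_
        rw [hb, if_pos hpos]
      · exact absurd hzero.symm hcne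
      · refine main (-1) (by norm_num) ?_
        rw [hb, if_neg (by linarith), if_pos hneg]
  -- even (nonzero) complete quotients have norm 1
  have heven1 : ∀ n, Even n → n ≠ 0 → ‖α n‖ = 1 := by
    intro n hn hn0
    obtain ⟨m, hm⟩ : ∃ m, n = m + 1 := ⟨n - 1, by omega⟩
    have hmodd : Odd m := by
      rcases hn with ⟨t, ht⟩
      exact ⟨t - 1, by omega⟩
    subst hm
    rw [hrecn, (hodd2 m hmodd).1]
    norm_num
  have heven2 : ∀ n, Even n → n ≠ 0 → ‖((b n : ℚ) : ℚ_[p])‖ = 1 := by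
    intro n hn hn0
    have h1 := hesub n hn
    have h2 := heven1 n hn hn0
    have hrw : ((b n : ℚ) : ℚ_[p]) = α n - (α n - ((b n : ℚ) : ℚ_[p])) := by ring
    rw [hrw, padic_sub_norm_left (by rw [h2]; exact h1), h2]
  -- difference recursion in norm form
  have hdiff : ∀ (x y : ℚ_[p]) (q : ℚ), x - (q : ℚ_[p]) ≠ 0 → y - (q : ℚ_[p]) ≠ 0 →
      ‖(x - (q : ℚ_[p]))⁻¹ - (y - (q : ℚ_[p]))⁻¹‖ =
        ‖x - y‖ / (‖x - (q : ℚ_[p])‖ * ‖y - (q : ℚ_[p])‖) := by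
    intro x y q hx hy
    have h1 : (x - (q : ℚ_[p]))⁻¹ - (y - (q : ℚ_[p]))⁻¹ =
        -(x - y) / ((x - (q : ℚ_[p])) * (y - (q : ℚ_[p]))) := by
      field_simp
      try ring
    rw [h1, norm_div, norm_neg, norm_mul]
  -- periodicity of the complete quotients
  have hstepK : ∀ n, α (n + 1 + K) = (α (n + K) - (b n : ℚ_[p]))⁻¹ := by
    intro n
    have h1 : n + 1 + K = (n + K) + 1 := by ring
    rw [h1, hrec (n + K), hK n]
  have hA0 : α K = α 0 := by
    have hback : ∀ n, α (n + 1 + K) = α (n + 1) → α (n + K) = α n := by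
      intro n h
      rw [hstepK n, hrec n] at h
      exact sub_left_inj.mp (inv_injective h)
    have hdown : ∀ n, α (n + K) = α n → α K = α 0 := by
      intro n
      induction n with
      | zero => intro h; simpa using h
      | succ n ih => intro h; exact ih (hback n h)
    by_cases hex : ∃ n, α (n + K) = α n
    · obtain ⟨n, hn⟩ := hex; exact hdown n hn
    · exfalso
      push_neg at hex
      have hAne : ∀ n, α n - α (n + K) ≠ 0 := fun n h => hex n (sub_eq_zero.mp h).symm
      have hApos : ∀ n, 0 < ‖α n - α (n + K)‖ := fun n => norm_pos_iff.mpr (hAne n)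
      have hArec : ∀ n, ‖α (n+1) - α (n+1+K)‖ =
          ‖α n - α (n+K)‖ / (‖α n - (b n : ℚ_[p])‖ * ‖α (n+K) - (b n : ℚ_[p])‖) := by
        intro n
        rw [hrec n, hstepK n]
        exact hdiff (α n) (α (n + K)) (b n) (hne n (b n)) (hne (n + K) (b n))
      -- even step: multiply by at least p (indeed p²)
      have heA : ∀ n, Even n → (p:ℝ) * ‖α n - α (n+K)‖ ≤ ‖α (n+1) - α (n+1+K)‖ := by
        intro n hn
        rw [hArec n]
        have ha := padic_norm_le_inv (hesub n hn)
        have hc : ‖α (n+K) - (b n : ℚ_[p])‖ ≤ (p:ℝ)⁻¹ := by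
          rw [← hK n]
          exact padic_norm_le_inv (hesub (n+K) (by exact Even.add hn hKeven))
        have hapos : (0:ℝ) < ‖α n - (b n : ℚ_[p])‖ := norm_pos_iff.mpr (hne n (b n))
        have hcpos : (0:ℝ) < ‖α (n+K) - (b n : ℚ_[p])‖ := norm_pos_iff.mpr (hne (n+K) (b n))
        have hinv1 : (p:ℝ)⁻¹ ≤ 1 := by
          nlinarith [mul_pos (inv_pos.mpr hppos) (sub_pos.mpr honep),
            mul_inv_cancel₀ (ne_of_gt hppos)]
        have hmul : ‖α n - (b n : ℚ_[p])‖ * ‖α (n+K) - (b n : ℚ_[p])‖ ≤ (p:ℝ)⁻¹ * 1 :=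
          mul_le_mul ha (le_trans hc hinv1) (le_of_lt hcpos) (by positivity)
        have h2 : ‖α n - α (n+K)‖ / ((p:ℝ)⁻¹ * 1) ≤
            ‖α n - α (n+K)‖ / (‖α n - (b n : ℚ_[p])‖ * ‖α (n+K) - (b n : ℚ_[p])‖) :=
          div_le_div_of_nonneg_left (norm_nonneg _) (by positivity) hmul
        calc (p:ℝ) * ‖α n - α (n+K)‖ = ‖α n - α (n+K)‖ / ((p:ℝ)⁻¹ * 1) := by
              field_simp
          _ ≤ _ := h2
      have hoA : ∀ n, Odd n → ‖α (n+1) - α (n+1+K)‖ = ‖α n - α (n+K)‖ := by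
        intro n hn
        rw [hArec n, (hodd2 n hn).1]
        have h2 : ‖α (n+K) - (b n : ℚ_[p])‖ = 1 := by
          rw [← hK n]
          exact (hodd2 (n+K) (by exact Odd.add_even hn hKeven)).1
        rw [h2]
        norm_num
      -- descent
      apply geom_escape honep (fun m => ‖α (2*m + 2) - α (2*m + 2 + K)‖)
        (hApos 2) ?_ ?_
      · intro m
        show (p:ℝ) * ‖α (2*m+2) - α (2*m+2+K)‖ ≤ ‖α (2*(m+1)+2) - α (2*(m+1)+2+K)‖
        have he := heA (2*m + 2) (by exact ⟨m+1, by ring⟩)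
        have ho := hoA (2*m + 2 + 1) (by exact ⟨m+1, by ring⟩)
        have hidx : 2*(m+1) + 2 = 2*m + 2 + 1 + 1 := by ring
        rw [hidx, ho]
        exact he
      · intro m
        show ‖α (2*m+2) - α (2*m+2+K)‖ ≤ 1
        have h1 : ‖α (2*m+2)‖ = 1 := heven1 _ (by exact ⟨m+1, by ring⟩) (by omega)
        have h2 : ‖α (2*m+2+K)‖ = 1 :=
          heven1 _ (by exact Even.add (⟨m+1, by ring⟩ : Even (2*m+2)) hKeven) (by omega)
        exact padic_sub_norm_le (le_of_eq h1) (le_of_eq h2)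
  have hAper : ∀ n, α (n + K) = α n := by
    intro n
    induction n with
    | zero => simpa using hA0
    | succ n ih =>
      have h1 : n + 1 + K = (n + K) + 1 := by ring
      rw [h1, hrec (n + K), hK n, ih, ← hrec n]
  -- first conclusion
  have hgoal1 : ‖α₀‖ = 1 := by
    rw [← h0, ← hA0]
    exact heven1 K hKeven hKpos
  refine ⟨hgoal1, ?_⟩
  -- conjugate machinery
  set ac : ℚ_[p] := (r : ℚ_[p]) - α₀ with hacdef
  have hac_irr : ∀ q : ℚ, ac ≠ (q : ℚ_[p]) := by
    intro q h
    apply hirr (r - q)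
    rw [hacdef] at h
    push_cast
    linear_combination -h
  have hacne : α₀ ≠ ac := by
    intro h
    apply hirr (r / 2)
    rw [hacdef] at h
    push_cast
    linear_combination h / 2
  have hkey : ∀ x y : ℚ, ((x : ℚ_[p]) + (y : ℚ_[p]) * α₀) * ((x : ℚ_[p]) + (y : ℚ_[p]) * ac) =
      ((x^2 + x*y*r - y^2*s : ℚ) : ℚ_[p]) := by
    intro x y
    rw [hacdef]
    push_cast
    linear_combination (-(y:ℚ_[p])^2) * hquad
  set β : ℕ → ℚ_[p] := conjSeq p b ac with hβdef
  have hβ0 : β 0 = ac := rfl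
  have hβs : ∀ n, β (n+1) = (β n - (b n : ℚ_[p]))⁻¹ := fun n => rfl
  -- coordinates
  have hcoord : ∀ n, ∃ x y : ℚ, y ≠ 0 ∧ α n = (x : ℚ_[p]) + (y : ℚ_[p]) * α₀ ∧
      β n = (x : ℚ_[p]) + (y : ℚ_[p]) * ac := by
    intro n
    induction n with
    | zero =>
      refine ⟨0, 1, one_ne_zero, ?_, ?_⟩
      · rw [h0]; push_cast; ring
      · rw [hβ0]; push_cast; ring
    | succ n ih =>
      obtain ⟨x, y, hy, hax, hbx⟩ := ih
      set x' : ℚ := x - b n with hx'def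
      set N : ℚ := x'^2 + x'*y*r - y^2*s with hNdef
      have hu : α n - (b n : ℚ_[p]) = (x' : ℚ_[p]) + (y : ℚ_[p]) * α₀ := by
        rw [hax, hx'def]; push_cast; ring
      have hv : β n - (b n : ℚ_[p]) = (x' : ℚ_[p]) + (y : ℚ_[p]) * ac := by
        rw [hbx, hx'def]; push_cast; ring
      have hune : (x' : ℚ_[p]) + (y : ℚ_[p]) * α₀ ≠ 0 := by
        rw [← hu]; exact hne n (b n)
      have hyQ : ((y : ℚ) : ℚ_[p]) ≠ 0 := by exact_mod_cast hy
      have hvne : (x' : ℚ_[p]) + (y : ℚ_[p]) * ac ≠ 0 := by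
        intro h
        apply hac_irr (-x'/y)
        push_cast
        rw [eq_div_iff hyQ]
        linear_combination h
      have hNcast : ((N : ℚ) : ℚ_[p]) =
          ((x' : ℚ_[p]) + (y : ℚ_[p]) * α₀) * ((x' : ℚ_[p]) + (y : ℚ_[p]) * ac) := by
        rw [hNdef, ← hkey x' y]
      have hNne : ((N : ℚ) : ℚ_[p]) ≠ 0 := by
        rw [hNcast]; exact mul_ne_zero hune hvne
      have hN0 : N ≠ 0 := fun h => hNne (by rw [h]; norm_cast)
      refine ⟨(x' + y*r)/N, -y/N, div_ne_zero (neg_ne_zero.mpr hy) hN0, ?_, ?_⟩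
      · rw [hrec n, hu]
        have hcoo : (((x' + y*r)/N : ℚ) : ℚ_[p]) + ((-y/N : ℚ) : ℚ_[p]) * α₀ =
            ((x' : ℚ_[p]) + (y : ℚ_[p]) * ac) / ((N : ℚ) : ℚ_[p]) := by
          rw [hacdef]
          push_cast
          field_simp
          ring
        rw [hcoo, eq_div_iff hNne, hNcast, inv_mul_cancel_left₀ hune]
      · rw [hβs n, hv]
        have hcoo : (((x' + y*r)/N : ℚ) : ℚ_[p]) + ((-y/N : ℚ) : ℚ_[p]) * ac =
            ((x' : ℚ_[p]) + (y : ℚ_[p]) * α₀) / ((N : ℚ) : ℚ_[p]) := by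
          rw [hacdef]
          push_cast
          field_simp
          ring
        rw [hcoo, eq_div_iff hNne, hNcast, mul_comm ((x' : ℚ_[p]) + (y : ℚ_[p]) * α₀),
          inv_mul_cancel_left₀ hvne]
  have hβ_irr : ∀ n (q : ℚ), β n ≠ (q : ℚ_[p]) := by
    intro n q h
    obtain ⟨x, y, hy, _, hbx⟩ := hcoord n
    apply hac_irr ((q - x)/y)
    have hyQ : ((y : ℚ) : ℚ_[p]) ≠ 0 := by exact_mod_cast hy
    push_cast
    rw [eq_div_iff hyQ]
    rw [hbx] at h
    linear_combination h
  have hβsubne : ∀ n (q : ℚ), β n - (q : ℚ_[p]) ≠ 0 := fun n q h => hβ_irr n q (sub_eq_zero.mp h)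
  have hαβ : ∀ n, α n - β n ≠ 0 := by
    intro n h
    obtain ⟨x, y, hy, hax, hbx⟩ := hcoord n
    rw [hax, hbx] at h
    have hyQ : ((y : ℚ) : ℚ_[p]) ≠ 0 := by exact_mod_cast hy
    apply hacne
    have h2 : (y : ℚ_[p]) * (α₀ - ac) = 0 := by linear_combination h
    rcases mul_eq_zero.mp h2 with h3 | h3
    · exact absurd h3 hyQ
    · exact sub_eq_zero.mp h3
  have hβper : ∀ n, β (n + K) = β n := by
    intro n
    obtain ⟨x, y, hy, hax, hbx⟩ := hcoord n
    obtain ⟨x', y', hy', hax', hbx'⟩ := hcoord (n + K)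
    have heq : (x' : ℚ_[p]) + (y' : ℚ_[p]) * α₀ = (x : ℚ_[p]) + (y : ℚ_[p]) * α₀ := by
      rw [← hax, ← hax', hAper n]
    by_cases hyy : y' = y
    · subst hyy
      have hx : (x' : ℚ_[p]) = (x : ℚ_[p]) := by linear_combination heq
      have hx2 : x' = x := by exact_mod_cast hx
      rw [hbx', hbx, hx2]
    · exfalso
      apply hirr ((x - x')/(y' - y))
      have hyQ : ((y' - y : ℚ) : ℚ_[p]) ≠ 0 := by
        simp only [Rat.cast_sub, ne_eq, sub_eq_zero]
        exact_mod_cast hyy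
      push_cast
      rw [eq_div_iff (by push_cast at hyQ ⊢; exact hyQ)]
      linear_combination heq
  have hβrecn : ∀ n, ‖β (n+1)‖ = ‖β n - (b n : ℚ_[p])‖⁻¹ := fun n => by
    rw [hβs n, norm_inv]
  -- propagation of ‖β n‖ < 1 along even indices
  have hprop : ∀ n, Even n → n ≠ 0 → ‖β n‖ < 1 → ‖β (n+2)‖ < 1 := by
    intro n hn hn0 h
    have hb1 : ‖((b n : ℚ) : ℚ_[p])‖ = 1 := heven2 n hn hn0
    have h1 : ‖β n - (b n : ℚ_[p])‖ = 1 := by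
      have := padic_sub_norm_right (a := ((b n : ℚ) : ℚ_[p])) (x := β n) (by rw [hb1]; exact h)
      rw [this, hb1]
    have h2 : ‖β (n+1)‖ = 1 := by rw [hβrecn, h1]; norm_num
    have hodd' : Odd (n+1) := Even.add_one hn
    have hb2 : 1 < ‖((b (n+1) : ℚ) : ℚ_[p])‖ := by
      rw [(hodd2 (n+1) hodd').2]; exact hodd1 (n+1) hodd'
    have h3 : ‖β (n+1) - (b (n+1) : ℚ_[p])‖ = ‖((b (n+1) : ℚ) : ℚ_[p])‖ :=
      padic_sub_norm_right (by rw [h2]; exact hb2)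
    have h4 : n + 2 = (n + 1) + 1 := by ring
    rw [h4, hβrecn, h3]
    exact inv_lt_one_of_one_lt₀ hb2
  -- existence of an even index with ‖β‖ < 1
  have hex : ∃ n, Even n ∧ n ≠ 0 ∧ ‖β n‖ < 1 := by
    by_contra hbad
    push_neg at hbad
    have hone : ∀ n, Even n → n ≠ 0 → ‖β n‖ = 1 := by
      intro n hn hn0
      refine le_antisymm ?_ (hbad n hn hn0)
      by_contra hgt
      push_neg at hgt
      have hb1 : ‖((b n : ℚ) : ℚ_[p])‖ = 1 := heven2 n hn hn0
      have h1 : ‖β n - (b n : ℚ_[p])‖ = ‖β n‖ :=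
        padic_sub_norm_left (by rw [hb1]; exact hgt)
      have h2 : ‖β (n+1)‖ < 1 := by
        rw [hβrecn, h1]
        exact inv_lt_one_of_one_lt₀ hgt
      have hodd' : Odd (n+1) := Even.add_one hn
      have hb2 : 1 < ‖((b (n+1) : ℚ) : ℚ_[p])‖ := by
        rw [(hodd2 (n+1) hodd').2]; exact hodd1 (n+1) hodd'
      have h3 : ‖β (n+1) - (b (n+1) : ℚ_[p])‖ = ‖((b (n+1) : ℚ) : ℚ_[p])‖ :=
        padic_sub_norm_right (by exact lt_trans h2 hb2)
      have h4 : ‖β (n+2)‖ < 1 := by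
        have h5 : n + 2 = (n + 1) + 1 := by ring
        rw [h5, hβrecn, h3]
        exact inv_lt_one_of_one_lt₀ hb2
      exact absurd h4 (not_lt.mpr (hbad (n+2) (by exact Even.add hn ⟨1, rfl⟩) (by omega)))
    -- descent for D n = ‖α n - β n‖
    have hDrec : ∀ n, ‖α (n+1) - β (n+1)‖ =
        ‖α n - β n‖ / (‖α n - (b n : ℚ_[p])‖ * ‖β n - (b n : ℚ_[p])‖) := by
      intro n
      rw [hrec n, hβs n]
      exact hdiff (α n) (β n) (b n) (hne n (b n)) (hβsubne n (b n))
    have hstep2 : ∀ n, Even n → n ≠ 0 → (p:ℝ) * ‖α n - β n‖ ≤ ‖α (n+2) - β (n+2)‖ := by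
      intro n hn hn0
      have hodd' : Odd (n+1) := Even.add_one hn
      -- first step
      have ha := padic_norm_le_inv (hesub n hn)
      have hb1 : ‖((b n : ℚ) : ℚ_[p])‖ = 1 := heven2 n hn hn0
      have hc : ‖β n - (b n : ℚ_[p])‖ ≤ 1 :=
        padic_sub_norm_le (le_of_eq (hone n hn hn0)) (le_of_eq hb1)
      have hapos : (0:ℝ) < ‖α n - (b n : ℚ_[p])‖ := norm_pos_iff.mpr (hne n (b n))
      have hcpos : (0:ℝ) < ‖β n - (b n : ℚ_[p])‖ := norm_pos_iff.mpr (hβsubne n (b n))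
      have hmul : ‖α n - (b n : ℚ_[p])‖ * ‖β n - (b n : ℚ_[p])‖ ≤ (p:ℝ)⁻¹ * 1 :=
        mul_le_mul ha hc (le_of_lt hcpos) (by positivity)
      have h1 : (p:ℝ) * ‖α n - β n‖ ≤ ‖α (n+1) - β (n+1)‖ := by
        rw [hDrec n]
        calc (p:ℝ) * ‖α n - β n‖ = ‖α n - β n‖ / ((p:ℝ)⁻¹ * 1) := by field_simp
          _ ≤ _ := div_le_div_of_nonneg_left (norm_nonneg _) (by positivity) hmul
      -- second step: equality
      have hα1 : ‖α (n+1) - (b (n+1) : ℚ_[p])‖ = 1 := (hodd2 (n+1) hodd').1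
      have hβ2 : ‖β (n+2)‖ = 1 := hone (n+2) (by exact Even.add hn ⟨1, rfl⟩) (by omega)
      have hc2 : ‖β (n+1) - (b (n+1) : ℚ_[p])‖ = 1 := by
        have h5 : n + 2 = (n + 1) + 1 := by ring
        rw [h5, hβrecn] at hβ2
        rwa [inv_eq_one] at hβ2
      have h2 : ‖α (n+2) - β (n+2)‖ = ‖α (n+1) - β (n+1)‖ := by
        have h5 : n + 2 = (n + 1) + 1 := by ring
        rw [h5, hDrec (n+1), hα1, hc2]
        norm_num
      rw [h2]
      exact h1
    apply geom_escape honep (fun m => ‖α (2*m+2) - β (2*m+2)‖)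
      (norm_pos_iff.mpr (hαβ 2)) ?_ ?_
    · intro m
      show (p:ℝ) * ‖α (2*m+2) - β (2*m+2)‖ ≤ ‖α (2*(m+1)+2) - β (2*(m+1)+2)‖
      have := hstep2 (2*m+2) ⟨m+1, by ring⟩ (by omega)
      have hidx : 2*(m+1) + 2 = 2*m + 2 + 2 := by ring
      rw [hidx]
      exact this
    · intro m
      show ‖α (2*m+2) - β (2*m+2)‖ ≤ 1
      exact padic_sub_norm_le
        (le_of_eq (heven1 (2*m+2) ⟨m+1, by ring⟩ (by omega)))
        (le_of_eq (hone (2*m+2) ⟨m+1, by ring⟩ (by omega)))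
  -- propagate down to β 0 using periodicity
  obtain ⟨N, hNe, hN0, hNlt⟩ := hex
  have hprop2 : ∀ j, ‖β (N + 2*j)‖ < 1 := by
    intro j
    induction j with
    | zero => simpa using hNlt
    | succ j ih =>
      have hidx : N + 2*(j+1) = (N + 2*j) + 2 := by ring
      rw [hidx]
      exact hprop (N + 2*j) (by exact Even.add hNe (even_two_mul j)) (by omega) ih
  have hβmul : ∀ m, β (m * K) = β 0 := by
    intro m
    induction m with
    | zero => simp
    | succ m ih =>
      have hidx : (m+1) * K = m * K + K := by ring
      rw [hidx, hβper (m * K), ih]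
  -- pick the index N * K
  obtain ⟨t, ht⟩ := hNe
  obtain ⟨K', hK'⟩ : ∃ K', K = K' + 1 := ⟨K - 1, by omega⟩
  have hidx : N * K = N + 2 * (t * K') := by
    rw [ht, hK']
    ring
  have hfin : ‖β 0‖ < 1 := by
    rw [← hβmul N, hidx]
    exact hprop2 (t * K')
  rw [hβ0, hacdef] at hfin
  exact hfin
end

section
/- Let p be an odd prime and let α₀ ∈ ℚ_p be a quadratic irrational with conjugate ᾱ₀. Let (α_n), (b_n) be the sequences produced by Browkin's second algorithm applied to α₀, and assume the expansion is periodic. If ‖α₀‖_p = 1 and ‖ᾱ₀‖_p < 1, then the pre-period of the expansion has even length. -/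
section Aux

variable {p : ℕ} [hpf : Fact p.Prime]

lemma frac_sub' {a b : ℚ} (ha : IsPadicFrac p a) (hb : IsPadicFrac p b) :
    IsPadicFrac p (a - b) := by
  obtain ⟨m, z, hz⟩ := ha
  obtain ⟨m', z', hz'⟩ := hb
  refine ⟨m + m', z * (p:ℤ) ^ m' - z' * (p:ℤ) ^ m, ?_⟩
  push_cast
  rw [sub_mul, pow_add]
  rw [show a * ((p:ℚ) ^ m * (p:ℚ) ^ m') = (a * (p:ℚ)^m) * (p:ℚ)^m' by ring,
    show b * ((p:ℚ) ^ m * (p:ℚ) ^ m') = (b * (p:ℚ)^m') * (p:ℚ)^m by ring, hz, hz']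

lemma frac_int' {a : ℚ} (ha : IsPadicFrac p a) (h : ‖(a : ℚ_[p])‖ ≤ 1) :
    ∃ z : ℤ, a = (z : ℚ) := by
  obtain ⟨m, z, hz⟩ := ha
  induction m generalizing z a with
  | zero => exact ⟨z, by simpa using hz⟩
  | succ m ih =>
    have hpQ : (p:ℚ) ≠ 0 := Nat.cast_ne_zero.2 hpf.out.pos.ne'
    have hzc : ((z : ℚ) : ℚ_[p]) = (a : ℚ_[p]) * (p:ℚ_[p]) ^ (m+1) := by
      rw [← hz]; push_cast; ring
    have hnz : ‖((z:ℚ):ℚ_[p])‖ < 1 := by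
      rw [hzc, norm_mul, norm_pow,
        (show ‖(p:ℚ_[p])‖ = (p:ℝ)⁻¹ by exact_mod_cast Padic.norm_p)]
      have hp1 : (1:ℝ) < p := by exact_mod_cast hpf.out.one_lt
      have h2 : ((p:ℝ))⁻¹ ^ (m+1) < 1 := by
        apply pow_lt_one₀ (by positivity) (by rw [inv_lt_one_iff₀]; right; exact hp1)
        omega
      calc ‖(a:ℚ_[p])‖ * ((p:ℝ))⁻¹ ^ (m+1) ≤ 1 * ((p:ℝ))⁻¹^(m+1) := by
            apply mul_le_mul_of_nonneg_right h (by positivity)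
        _ < 1 := by simpa using h2
    have hdvd : (p:ℤ) ∣ z := by
      rw [show ((z:ℚ):ℚ_[p]) = ((z:ℤ):ℚ_[p]) by push_cast; ring] at hnz
      exact (Padic.norm_intCast_lt_one_iff (k := z)).1 hnz
    obtain ⟨w, rfl⟩ := hdvd
    refine ih h w ?_
    have : a * (p:ℚ)^m * (p:ℚ) = (w:ℚ) * (p:ℚ) := by
      rw [show a * (p:ℚ)^m * (p:ℚ) = a * (p:ℚ)^(m+1) by ring, hz]; push_cast; ring
    exact mul_right_cancel₀ hpQ this

lemma frac_small_zero' {a : ℚ} (ha : IsPadicFrac p a) (h1 : ‖(a : ℚ_[p])‖ < 1)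
    (h2 : |a| < p) : a = 0 := by
  obtain ⟨z, rfl⟩ := frac_int' ha h1.le
  have hdvd : (p:ℤ) ∣ z := by
    rw [show ((z:ℚ):ℚ_[p]) = ((z:ℤ):ℚ_[p]) by push_cast; ring] at h1
    exact (Padic.norm_intCast_lt_one_iff (k := z)).1 h1
  have habs : |z| < (p:ℤ) := by exact_mod_cast (by simpa using h2 : |(z:ℚ)| < (p:ℚ))
  have hz0 : z = 0 := by
    rcases hdvd with ⟨w, rfl⟩
    have hp0 : (0:ℤ) < p := by exact_mod_cast hpf.out.pos
    rcases eq_or_ne w 0 with h | h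
    · simp [h]
    · exfalso
      have h1' : (1:ℤ) ≤ |w| := Int.one_le_abs h
      have : |(p:ℤ) * w| = (p:ℤ) * |w| := by rw [abs_mul, abs_of_pos hp0]
      nlinarith
  simp [hz0]

lemma norm_sub_right' {x y : ℚ_[p]} (h : ‖y‖ < ‖x‖) : ‖x - y‖ = ‖x‖ := by
  rw [sub_eq_add_neg, Padic.add_eq_max_of_ne
    (by rw [norm_neg]; exact (ne_of_lt h).symm)]
  rw [norm_neg]
  exact max_eq_left h.le

lemma norm_sub_left' {x y : ℚ_[p]} (h : ‖x‖ < ‖y‖) : ‖x - y‖ = ‖y‖ := by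
  rw [← norm_neg, neg_sub]; exact norm_sub_right' h

end Aux

/-- For `α₀` a quadratic irrational (with `α₀² = r·α₀ + s`, conjugate `r - α₀`)
whose Browkin II expansion is periodic: if `‖α₀‖_p = 1` and `‖ᾱ₀‖_p < 1`, then
the pre-period (the least `h` admitting a period `k ≥ 1` valid from index `h`
on) has even length. -/
theorem stmt_15 (p : ℕ) [Fact p.Prime] (hp : p ≠ 2)
    (α₀ : ℚ_[p]) (hirr : ∀ q : ℚ, α₀ ≠ (q : ℚ_[p]))
    (r s : ℚ) (hquad : α₀ ^ 2 = (r : ℚ_[p]) * α₀ + (s : ℚ_[p]))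
    (α : ℕ → ℚ_[p]) (b : ℕ → ℚ) (h0 : α 0 = α₀) (halg : Alg2 p α b)
    (hper : ∃ h k : ℕ, 1 ≤ k ∧ ∀ n, h ≤ n → b (n + k) = b n)
    (hn1 : ‖α₀‖ = 1) (hn2 : ‖(r : ℚ_[p]) - α₀‖ < 1) :
    Even (sInf {h : ℕ | ∃ k : ℕ, 1 ≤ k ∧ ∀ n, h ≤ n → b (n + k) = b n}) := by
  obtain ⟨heven, hoddf, hrec⟩ := halg
  have hpp : p.Prime := Fact.out
  have hp1R : (1:ℝ) < p := by exact_mod_cast hpp.one_lt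
  have hp0R : (0:ℝ) < p := by linarith
  -- the conjugate sequence
  obtain ⟨c, hc0, hcs⟩ : ∃ c : ℕ → ℚ_[p], c 0 = (r:ℚ_[p]) - α₀ ∧
      ∀ n, c (n+1) = (c n - ((b n : ℚ) : ℚ_[p]))⁻¹ :=
    ⟨fun n => Nat.rec ((r:ℚ_[p]) - α₀) (fun m cm => (cm - ((b m : ℚ):ℚ_[p]))⁻¹) n,
      rfl, fun _ => rfl⟩
  -- every α n is irrational
  have hirrn : ∀ n (q : ℚ), α n ≠ (q : ℚ_[p]) := by
    intro n
    induction n with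
    | zero => rw [h0]; exact hirr
    | succ n ih =>
      intro q hq
      rw [hrec n] at hq
      have hne : α n - ((b n : ℚ):ℚ_[p]) ≠ 0 := sub_ne_zero.2 (ih (b n))
      rcases eq_or_ne q 0 with rfl | hq0
      · rw [Rat.cast_zero, inv_eq_zero] at hq
        exact hne hq
      · have h1 : α n - ((b n : ℚ):ℚ_[p]) = ((q:ℚ_[p]))⁻¹ := by
          rw [← hq, inv_inv]
        apply ih (b n + q⁻¹)
        rw [show α n = (α n - ((b n:ℚ):ℚ_[p])) + ((b n:ℚ):ℚ_[p]) by ring, h1]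
        push_cast
        ring
  have hsubne : ∀ n, α n - ((b n : ℚ):ℚ_[p]) ≠ 0 := fun n => sub_ne_zero.2 (hirrn n (b n))
  have hback : ∀ n, α n - ((b n : ℚ):ℚ_[p]) = (α (n+1))⁻¹ := by
    intro n; rw [hrec n, inv_inv]
  -- the key norm invariant
  have hInv : ∀ n : ℕ, (Even n → ‖α n‖ = 1 ∧ ‖c n‖ < 1) ∧
      (¬ Even n → (p:ℝ) ≤ ‖α n‖ ∧ ‖c n‖ = 1) := by
    intro n
    induction n with
    | zero =>
      refine ⟨fun _ => ⟨by rw [h0]; exact hn1, by rw [hc0]; exact hn2⟩, fun h => ?_⟩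
      exact absurd Even.zero h
    | succ n ih =>
      by_cases hev : Even n
      · -- n even, n+1 odd
        obtain ⟨ha1, hc1⟩ := ih.1 hev
        obtain ⟨hbf, hbabs, hbn⟩ := heven n hev
        have hbnorm : ‖((b n : ℚ):ℚ_[p])‖ = 1 := by
          rw [show ((b n:ℚ):ℚ_[p]) = α n - (α n - ((b n:ℚ):ℚ_[p])) by ring,
            norm_sub_right' (by rw [ha1]; exact hbn), ha1]
        refine ⟨fun h => absurd (Nat.even_add_one.1 h) (not_not.2 hev), fun _ => ?_⟩
        constructor
        · rw [hrec n, norm_inv]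
          have h1 : ‖α n - ((b n:ℚ):ℚ_[p])‖ ≤ (p:ℝ)⁻¹ := by
            have h2 := (Padic.norm_le_pow_iff_norm_lt_pow_add_one
              (α n - ((b n:ℚ):ℚ_[p])) (-1)).2 (by simpa using hbn)
            simpa [zpow_neg, zpow_one] using h2
          have h3 : 0 < ‖α n - ((b n:ℚ):ℚ_[p])‖ := norm_pos_iff.2 (hsubne n)
          rw [← inv_inv (p:ℝ)]
          exact inv_anti₀ h3 h1
        · rw [hcs n]
          have h1 : ‖c n - ((b n:ℚ):ℚ_[p])‖ = 1 := by
            rw [norm_sub_left' (by rw [hbnorm]; exact hc1), hbnorm]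
          rw [norm_inv, h1]; norm_num
      · -- n odd, n+1 even
        obtain ⟨ha1, hc1⟩ := ih.2 hev
        obtain ⟨c', ⟨hcf, hcabs, hcle⟩, hcase⟩ := hoddf n (Nat.not_even_iff_odd.1 hev)
        have hcnorm : ‖((c':ℚ):ℚ_[p])‖ = ‖α n‖ := by
          have h1 : ‖α n - ((c':ℚ):ℚ_[p])‖ < ‖α n‖ := lt_of_le_of_lt hcle
            (lt_of_lt_of_le hp1R ha1)
          rw [show ((c':ℚ):ℚ_[p]) = α n - (α n - ((c':ℚ):ℚ_[p])) by ring,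
            norm_sub_right' h1]
        have hbig : (p:ℝ) ≤ ‖((c':ℚ):ℚ_[p])‖ := by rw [hcnorm]; exact ha1
        have hkey : ‖α n - ((b n:ℚ):ℚ_[p])‖ = 1 ∧ (p:ℝ) ≤ ‖((b n:ℚ):ℚ_[p])‖ := by
          rcases hcase with ⟨hnorm1, hbe⟩ | ⟨hlt, hbe⟩
          · rw [hbe]; exact ⟨hnorm1, hbig⟩
          · have hc'ne : c' ≠ 0 := by
              intro h; rw [h] at hbig; simp at hbig
              rw [hbig] at hp1R; norm_num at hp1R
            set e : ℚ := if 0 < c' then 1 else if c' < 0 then -1 else 0 with he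
            have henorm : ‖((e:ℚ):ℚ_[p])‖ = 1 := by
              rcases lt_trichotomy c' 0 with h | h | h
              · rw [he, if_neg (by linarith), if_pos h]; simp
              · exact absurd h hc'ne
              · rw [he, if_pos h]; simp
            have hsplit : α n - ((b n:ℚ):ℚ_[p]) =
                (α n - ((c':ℚ):ℚ_[p])) + ((e:ℚ):ℚ_[p]) := by
              rw [hbe]; push_cast; ring
            have h1 : ‖α n - ((b n:ℚ):ℚ_[p])‖ = 1 := by
              rw [hsplit, Padic.add_eq_max_of_ne (by rw [henorm]; exact ne_of_lt hlt),
                henorm]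
              exact max_eq_right hlt.le
            have h2 : ((b n:ℚ):ℚ_[p]) = ((c':ℚ):ℚ_[p]) - ((e:ℚ):ℚ_[p]) := by
              rw [hbe]; push_cast; ring
            have h3 : (p:ℝ) ≤ ‖((b n:ℚ):ℚ_[p])‖ := by
              rw [h2, norm_sub_right' (by rw [henorm]; linarith), hcnorm]; exact ha1
            exact ⟨h1, h3⟩
        refine ⟨fun _ => ?_, fun h => absurd (Nat.even_add_one.2 hev) h⟩
        constructor
        · rw [hrec n, norm_inv, hkey.1]; norm_num
        · rw [hcs n]
          have h1 : ‖c n - ((b n:ℚ):ℚ_[p])‖ = ‖((b n:ℚ):ℚ_[p])‖ :=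
            norm_sub_left' (by rw [hc1]; linarith [hkey.2])
          rw [norm_inv, h1]
          have h2 : (0:ℝ) < ‖((b n:ℚ):ℚ_[p])‖ := by linarith [hkey.2]
          rw [inv_lt_one_iff₀]; right; linarith [hkey.2]
  have hα1 : ∀ n, (1:ℝ) ≤ ‖α n‖ := by
    intro n
    by_cases hev : Even n
    · rw [((hInv n).1 hev).1]
    · linarith [((hInv n).2 hev).1]
  -- representation of α n and c n as conjugate pairs over ℚ
  have hPair : ∀ n, ∃ x y : ℚ, α n = (x:ℚ_[p]) + (y:ℚ_[p]) * α₀ ∧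
      c n = (x:ℚ_[p]) + (y:ℚ_[p]) * ((r:ℚ_[p]) - α₀) := by
    intro n
    induction n with
    | zero => exact ⟨0, 1, by rw [h0]; push_cast; ring, by rw [hc0]; push_cast; ring⟩
    | succ n ih =>
      obtain ⟨x, y, hx, hy⟩ := ih
      set u : ℚ := x - b n with hu
      set NM : ℚ := u^2 + u*y*r - y^2*s with hNM
      have hα_sub : α n - ((b n:ℚ):ℚ_[p]) = (u:ℚ_[p]) + (y:ℚ_[p]) * α₀ := by
        rw [hx, hu]; push_cast; ring
      have hc_sub : c n - ((b n:ℚ):ℚ_[p]) = (u:ℚ_[p]) + (y:ℚ_[p]) * ((r:ℚ_[p]) - α₀) := by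
        rw [hy, hu]; push_cast; ring
      have hWα : ((u:ℚ_[p]) + (y:ℚ_[p]) * α₀) *
          (((u:ℚ_[p]) + (y:ℚ_[p])*(r:ℚ_[p])) - (y:ℚ_[p]) * α₀) = ((NM:ℚ):ℚ_[p]) := by
        rw [hNM]; push_cast
        linear_combination (-(y:ℚ_[p])^2) * hquad
      have hWc : ((u:ℚ_[p]) + (y:ℚ_[p]) * ((r:ℚ_[p]) - α₀)) *
          (((u:ℚ_[p]) + (y:ℚ_[p])*(r:ℚ_[p])) - (y:ℚ_[p]) * ((r:ℚ_[p]) - α₀)) = ((NM:ℚ):ℚ_[p]) := by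
        rw [hNM]; push_cast
        linear_combination (-(y:ℚ_[p])^2) * hquad
      have hNMne : (NM:ℚ) ≠ 0 := by
        intro h
        have h' : ((NM:ℚ):ℚ_[p]) = 0 := by rw [h]; simp
        rw [h'] at hWα
        rcases mul_eq_zero.1 hWα with h1 | h2
        · exact hsubne n (by rw [hα_sub]; exact h1)
        · rcases eq_or_ne y 0 with hy0 | hy0
          · apply hsubne n
            rw [hα_sub, hy0]
            rw [hy0] at h2
            simp only [Rat.cast_zero, zero_mul, sub_zero, add_zero] at h2 ⊢
            exact h2
          · apply hirr ((u + y*r)/y)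
            have h3 : (y:ℚ_[p]) * α₀ = (u:ℚ_[p]) + (y:ℚ_[p])*(r:ℚ_[p]) := by
              linear_combination -h2
            have hyc : ((y:ℚ):ℚ_[p]) ≠ 0 := Rat.cast_ne_zero.2 hy0
            push_cast
            rw [eq_div_iff (by exact_mod_cast hyc)]
            linear_combination h3
      have hNMc : ((NM:ℚ):ℚ_[p]) ≠ 0 := Rat.cast_ne_zero.2 hNMne
      refine ⟨(u + y*r)/NM, -y/NM, ?_, ?_⟩
      · rw [hrec n, hα_sub]
        apply inv_eq_of_mul_eq_one_right
        have hrepr : (((u + y*r)/NM : ℚ):ℚ_[p]) + ((-y/NM : ℚ):ℚ_[p]) * α₀ =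
            (((NM:ℚ):ℚ_[p]))⁻¹ * (((u:ℚ_[p]) + (y:ℚ_[p])*(r:ℚ_[p])) - (y:ℚ_[p]) * α₀) := by
          push_cast
          field_simp
          ring
        rw [hrepr, show ((u:ℚ_[p]) + (y:ℚ_[p]) * α₀) * ((((NM:ℚ):ℚ_[p]))⁻¹ *
            (((u:ℚ_[p]) + (y:ℚ_[p])*(r:ℚ_[p])) - (y:ℚ_[p]) * α₀)) =
            (((NM:ℚ):ℚ_[p]))⁻¹ * (((u:ℚ_[p]) + (y:ℚ_[p]) * α₀) *
            (((u:ℚ_[p]) + (y:ℚ_[p])*(r:ℚ_[p])) - (y:ℚ_[p]) * α₀)) by ring, hWα]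
        exact inv_mul_cancel₀ hNMc
      · rw [hcs n, hc_sub]
        apply inv_eq_of_mul_eq_one_right
        have hrepr : (((u + y*r)/NM : ℚ):ℚ_[p]) + ((-y/NM : ℚ):ℚ_[p]) * ((r:ℚ_[p]) - α₀) =
            (((NM:ℚ):ℚ_[p]))⁻¹ * (((u:ℚ_[p]) + (y:ℚ_[p])*(r:ℚ_[p])) - (y:ℚ_[p]) * ((r:ℚ_[p]) - α₀)) := by
          push_cast
          field_simp
          ring
        rw [hrepr, show ((u:ℚ_[p]) + (y:ℚ_[p]) * ((r:ℚ_[p]) - α₀)) * ((((NM:ℚ):ℚ_[p]))⁻¹ *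
            (((u:ℚ_[p]) + (y:ℚ_[p])*(r:ℚ_[p])) - (y:ℚ_[p]) * ((r:ℚ_[p]) - α₀))) =
            (((NM:ℚ):ℚ_[p]))⁻¹ * (((u:ℚ_[p]) + (y:ℚ_[p]) * ((r:ℚ_[p]) - α₀)) *
            (((u:ℚ_[p]) + (y:ℚ_[p])*(r:ℚ_[p])) - (y:ℚ_[p]) * ((r:ℚ_[p]) - α₀))) by ring, hWc]
        exact inv_mul_cancel₀ hNMc
  -- conjugation is well defined
  have hconj : ∀ m m', α m = α m' → c m = c m' := by
    intro m m' h
    obtain ⟨x, y, hx, hy⟩ := hPair m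
    obtain ⟨x', y', hx', hy'⟩ := hPair m'
    have heq : (x:ℚ_[p]) + (y:ℚ_[p]) * α₀ = (x':ℚ_[p]) + (y':ℚ_[p]) * α₀ := by
      rw [← hx, ← hx', h]
    have hyy : y = y' := by
      by_contra hy0
      apply hirr ((x' - x)/(y - y'))
      have hyne : ((y:ℚ_[p]) - (y':ℚ_[p])) ≠ 0 := by
        have h5 : ((y - y' : ℚ):ℚ_[p]) ≠ 0 := Rat.cast_ne_zero.2 (sub_ne_zero.2 hy0)
        push_cast at h5
        exact h5
      push_cast
      rw [eq_div_iff hyne]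
      linear_combination heq
    have hxx : (x:ℚ_[p]) = (x':ℚ_[p]) := by
      rw [hyy] at heq
      linear_combination heq
    rw [hy, hy', hyy, hxx]
  -- contraction: equal tails of b force equal α
  have hkeyEq : ∀ a a' : ℕ, (∀ m, b (a + m) = b (a' + m)) → α a = α a' := by
    intro a a' hb
    set δ : ℕ → ℝ := fun m => ‖α (a + m) - α (a' + m)‖ with hδ
    have hαne : ∀ i : ℕ, α i ≠ 0 := by
      intro i h
      have := hα1 i
      rw [h, norm_zero] at this
      linarith
    have hdiff : ∀ m, α (a + m) - α (a' + m) =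
        (α (a + m + 1))⁻¹ - (α (a' + m + 1))⁻¹ := by
      intro m
      have e1 := hback (a + m)
      have e2 := hback (a' + m)
      calc α (a + m) - α (a' + m)
          = (α (a+m) - ((b (a+m):ℚ):ℚ_[p])) - (α (a'+m) - ((b (a'+m):ℚ):ℚ_[p])) := by
            rw [hb m]; ring
        _ = (α (a + m + 1))⁻¹ - (α (a' + m + 1))⁻¹ := by rw [e1, e2]
    have hstep : ∀ m, δ m = δ (m+1) * ‖α (a+m+1)‖⁻¹ * ‖α (a'+m+1)‖⁻¹ := by
      intro m
      have hid : (α (a + m + 1))⁻¹ - (α (a' + m + 1))⁻¹ =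
          -(α (a + m + 1) - α (a' + m + 1)) * (α (a + m + 1))⁻¹ * (α (a' + m + 1))⁻¹ := by
        have hA := hαne (a + m + 1)
        have hB := hαne (a' + m + 1)
        field_simp
        ring
      rw [hδ]
      simp only
      rw [show a + (m+1) = a + m + 1 by ring, show a' + (m+1) = a' + m + 1 by ring]
      rw [hdiff m, hid, norm_mul, norm_mul, norm_neg, norm_inv, norm_inv]
    have hbound : ∀ m, δ m ≤ 2 := by
      intro m
      rw [hδ]
      simp only
      rw [hdiff m]
      have h1 : ‖(α (a + m + 1))⁻¹‖ ≤ 1 := by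
        rw [norm_inv]
        exact inv_le_one_of_one_le₀ (hα1 _)
      have h2 : ‖(α (a' + m + 1))⁻¹‖ ≤ 1 := by
        rw [norm_inv]
        exact inv_le_one_of_one_le₀ (hα1 _)
      calc ‖(α (a + m + 1))⁻¹ - (α (a' + m + 1))⁻¹‖
          ≤ ‖(α (a + m + 1))⁻¹‖ + ‖(α (a' + m + 1))⁻¹‖ := norm_sub_le _ _
        _ ≤ 2 := by linarith
    have hmono : ∀ m, δ m ≤ δ (m+1) := by
      intro m
      rw [hstep m]
      have h1 : ‖α (a+m+1)‖⁻¹ ≤ 1 := inv_le_one_of_one_le₀ (hα1 _)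
      have h2 : ‖α (a'+m+1)‖⁻¹ ≤ 1 := inv_le_one_of_one_le₀ (hα1 _)
      have h3 : (0:ℝ) ≤ δ (m+1) := norm_nonneg _
      have h4 : (0:ℝ) ≤ ‖α (a+m+1)‖⁻¹ := by positivity
      calc δ (m+1) * ‖α (a+m+1)‖⁻¹ * ‖α (a'+m+1)‖⁻¹
          ≤ δ (m+1) * ‖α (a+m+1)‖⁻¹ * 1 :=
            mul_le_mul_of_nonneg_left h2 (mul_nonneg h3 h4)
        _ = δ (m+1) * ‖α (a+m+1)‖⁻¹ := by ring
        _ ≤ δ (m+1) * 1 := mul_le_mul_of_nonneg_left h1 h3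
        _ = δ (m+1) := by ring
    have hgain : ∀ m, ¬ Even (a+m+1) → (p:ℝ) * δ m ≤ δ (m+1) := by
      intro m hodd
      have hpa : (p:ℝ) ≤ ‖α (a+m+1)‖ := ((hInv (a+m+1)).2 hodd).1
      have h2 : ‖α (a'+m+1)‖⁻¹ ≤ 1 := inv_le_one_of_one_le₀ (hα1 _)
      have h3 : (0:ℝ) ≤ δ (m+1) := norm_nonneg _
      have h5 : ‖α (a+m+1)‖⁻¹ ≤ (p:ℝ)⁻¹ := by
        apply inv_anti₀ hp0R hpa
      rw [hstep m]
      have h7 : (0:ℝ) ≤ ‖α (a+m+1)‖⁻¹ := by positivity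
      have h6 : δ (m+1) * ‖α (a+m+1)‖⁻¹ * ‖α (a'+m+1)‖⁻¹ ≤ δ (m+1) * (p:ℝ)⁻¹ := by
        calc δ (m+1) * ‖α (a+m+1)‖⁻¹ * ‖α (a'+m+1)‖⁻¹
            ≤ δ (m+1) * ‖α (a+m+1)‖⁻¹ * 1 :=
              mul_le_mul_of_nonneg_left h2 (mul_nonneg h3 h7)
          _ = δ (m+1) * ‖α (a+m+1)‖⁻¹ := by ring
          _ ≤ δ (m+1) * (p:ℝ)⁻¹ := mul_le_mul_of_nonneg_left h5 h3
      calc (p:ℝ) * (δ (m+1) * ‖α (a+m+1)‖⁻¹ * ‖α (a'+m+1)‖⁻¹)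
          ≤ (p:ℝ) * (δ (m+1) * (p:ℝ)⁻¹) := mul_le_mul_of_nonneg_left h6 hp0R.le
        _ = δ (m+1) := by field_simp
    have hgrow : ∀ j, (p:ℝ)^j * δ 0 ≤ δ (2*j) := by
      intro j
      induction j with
      | zero => simp
      | succ j ih =>
        have hkey2 : (p:ℝ) * δ (2*j) ≤ δ (2*j+2) := by
          by_cases hev : Even (a + 2*j + 1)
          · have hodd : ¬ Even (a + (2*j+1) + 1) := by
              intro h
              rw [show a + (2*j+1) + 1 = (a + 2*j + 1) + 1 by ring] at h
              exact (Nat.even_add_one.1 h) hev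
            calc (p:ℝ) * δ (2*j) ≤ (p:ℝ) * δ (2*j+1) :=
                  mul_le_mul_of_nonneg_left (hmono (2*j)) hp0R.le
              _ ≤ δ (2*j+2) := hgain (2*j+1) hodd
          · calc (p:ℝ) * δ (2*j) ≤ δ (2*j+1) := hgain (2*j) hev
              _ ≤ δ (2*j+2) := hmono (2*j+1)
        calc (p:ℝ)^(j+1) * δ 0 = (p:ℝ) * ((p:ℝ)^j * δ 0) := by ring
          _ ≤ (p:ℝ) * δ (2*j) := mul_le_mul_of_nonneg_left ih hp0R.le
          _ ≤ δ (2*j+2) := hkey2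
          _ = δ (2*(j+1)) := by rw [show 2*(j+1) = 2*j+2 from by ring]
    have hδ0 : δ 0 = 0 := by
      by_contra h
      have hd0 : 0 < δ 0 := lt_of_le_of_ne (norm_nonneg _) (Ne.symm h)
      obtain ⟨j, hj⟩ := pow_unbounded_of_one_lt (2 / δ 0) hp1R
      have h1 := hgrow j
      have h2 := hbound (2*j)
      have h3 : 2 / δ 0 * δ 0 = 2 := by field_simp
      nlinarith
    have : α (a + 0) - α (a' + 0) = 0 := by
      rw [← norm_eq_zero]
      exact hδ0
    have h4 : α a = α a' := by
      rw [show a = a + 0 by ring, show a' = a' + 0 by ring]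
      exact sub_eq_zero.1 this
    exact h4
  -- assembly
  set S : Set ℕ := {h : ℕ | ∃ k : ℕ, 1 ≤ k ∧ ∀ n, h ≤ n → b (n + k) = b n} with hSdef
  have hSne : S.Nonempty := by
    obtain ⟨h, k, hk1, hk⟩ := hper
    exact ⟨h, k, hk1, hk⟩
  by_contra hoddS
  have hodd' : Odd (sInf S) := Nat.not_even_iff_odd.1 hoddS
  obtain ⟨t, ht⟩ := hodd'
  set h₀ := sInf S with hh₀
  have hmem : h₀ ∈ S := Nat.sInf_mem hSne
  obtain ⟨k, hk1, hkp⟩ := hmem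
  have h₀pos : 1 ≤ h₀ := by omega
  set n := h₀ - 1 with hn
  have hn1' : h₀ = n + 1 := by omega
  set k2 := k + k with hk2
  have hper2 : ∀ m, h₀ ≤ m → b (m + k2) = b m := by
    intro m hm
    have e1 : b (m + k + k) = b (m + k) := hkp (m + k) (by omega)
    have e2 : b (m + k) = b m := hkp m hm
    rw [hk2, show m + (k + k) = m + k + k by ring, e1, e2]
  have hαeq : α (h₀ + k2) = α h₀ := by
    apply hkeyEq
    intro m
    rw [show h₀ + k2 + m = (h₀ + m) + k2 by ring]
    exact hper2 (h₀ + m) (by omega)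
  have hceq : c (h₀ + k2) = c h₀ := hconj _ _ hαeq
  have e1 : c h₀ = (c n - ((b n:ℚ):ℚ_[p]))⁻¹ := by rw [hn1']; exact hcs n
  have e2 : c (h₀ + k2) = (c (n + k2) - ((b (n + k2):ℚ):ℚ_[p]))⁻¹ := by
    rw [show h₀ + k2 = (n + k2) + 1 by omega]
    exact hcs (n + k2)
  have e3 : c (n + k2) - ((b (n + k2):ℚ):ℚ_[p]) = c n - ((b n:ℚ):ℚ_[p]) := by
    apply inv_injective
    rw [← e1, ← e2, hceq]
  have hd : ((b (n + k2) - b n : ℚ) : ℚ_[p]) = c (n + k2) - c n := by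
    push_cast
    linear_combination -e3
  have hEvenN : Even n := ⟨t, by omega⟩
  have hEvenN2 : Even (n + k2) := ⟨t + k, by omega⟩
  obtain ⟨hf1, hb1, _⟩ := heven n hEvenN
  obtain ⟨hf2, hb2, _⟩ := heven (n + k2) hEvenN2
  have hcn : ‖c n‖ < 1 := ((hInv n).1 hEvenN).2
  have hcn2 : ‖c (n + k2)‖ < 1 := ((hInv (n + k2)).1 hEvenN2).2
  have hdn : ‖((b (n + k2) - b n : ℚ):ℚ_[p])‖ < 1 := by
    rw [hd, sub_eq_add_neg]
    refine lt_of_le_of_lt (Padic.nonarchimedean _ _) ?_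
    rw [norm_neg]
    exact max_lt hcn2 hcn
  have habs2 : |b (n + k2) - b n| < (p:ℚ) := by
    calc |b (n + k2) - b n| ≤ |b (n + k2)| + |b n| := abs_sub _ _
      _ < (p:ℚ) := by linarith
  have h0d : b (n + k2) - b n = 0 := frac_small_zero' (frac_sub' hf2 hf1) hdn habs2
  have hbeq : b (n + k2) = b n := sub_eq_zero.1 h0d
  have hmemn : n ∈ S := by
    refine ⟨k2, by omega, fun m hm => ?_⟩
    rcases eq_or_lt_of_le hm with heq | hlt
    · rw [← heq]; exact hbeq
    · exact hper2 m (by omega)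
  have hle := Nat.sInf_le hmemn
  omega
end

section
/- Let p be an odd prime, let D be an integer that is not a perfect square, and suppose there exists α₀ ∈ ℚ_p with α₀² = D. Let (α_n), (b_n) be the sequences produced by Browkin's second algorithm applied to α₀. If the expansion is periodic, then its pre-period has length either 1 or even. -/
lemma padicFrac_eq_zero (p : ℕ) [Fact p.Prime] (a : ℚ) (hf : IsPadicFrac p a)
    (hn : ‖(a : ℚ_[p])‖ < 1) (ha : |a| < p) : a = 0 := by
  obtain ⟨m, z, hz⟩ := hf
  have hppos0 : (0:ℝ) < (p:ℝ) := by exact_mod_cast (Fact.out : p.Prime).pos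
  have hz' : (z : ℚ_[p]) = (a : ℚ_[p]) * (p : ℚ_[p]) ^ m := by
    exact_mod_cast (congrArg (fun x : ℚ => (x : ℚ_[p])) hz).symm
  have hppos : (0:ℝ) < (p:ℝ)⁻¹ ^ m := pow_pos (inv_pos.2 hppos0) m
  have hkey : (p:ℝ)⁻¹ ^ m = (p:ℝ) ^ (-(m:ℤ)) := by
    rw [inv_pow, ← zpow_natCast (p:ℝ) m, ← zpow_neg]
  have hnorm : ‖(z : ℚ_[p])‖ < (p:ℝ) ^ (-(m:ℤ)) := by
    rw [hz', norm_mul, norm_pow, Padic.norm_p, ← hkey]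
    exact mul_lt_of_lt_one_left hppos hn
  have hle : ‖(z : ℚ_[p])‖ ≤ (p:ℝ) ^ (-((m+1:ℕ):ℤ)) := by
    have := (Padic.norm_le_pow_iff_norm_lt_pow_add_one (z : ℚ_[p]) (-(m:ℤ)-1)).2
      (by rw [show (-(m:ℤ)-1+1) = -(m:ℤ) by ring]; exact hnorm)
    rw [show (-((m+1:ℕ):ℤ)) = -(m:ℤ)-1 by push_cast; ring]
    exact this
  obtain ⟨w, hw⟩ := (Padic.norm_int_le_pow_iff_dvd z (m+1)).1 hle
  have hpQ : ((p:ℚ)) ≠ 0 := by exact_mod_cast (Fact.out : p.Prime).ne_zero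
  have haw : a = (p:ℚ) * (w : ℚ) := by
    apply mul_right_cancel₀ (pow_ne_zero m hpQ)
    rw [hz]; push_cast [hw]; ring
  have hwabs : |(w:ℚ)| < 1 := by
    have hplt : (0:ℚ) < p := by exact_mod_cast (Fact.out : p.Prime).pos
    rw [haw, abs_mul, abs_of_pos hplt] at ha
    by_contra hc
    push_neg at hc
    nlinarith
  have h5 : -1 < w ∧ w < 1 := abs_lt.mp (by exact_mod_cast hwabs)
  have : w = 0 := by omega
  simp [haw, this]

lemma padicFrac_sub (p : ℕ) (a c : ℚ) (ha : IsPadicFrac p a) (hc : IsPadicFrac p c) :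
    IsPadicFrac p (a - c) := by
  obtain ⟨m1, z1, h1⟩ := ha
  obtain ⟨m2, z2, h2⟩ := hc
  refine ⟨m1 + m2, z1 * (p:ℤ)^m2 - z2 * (p:ℤ)^m1, ?_⟩
  push_cast
  rw [pow_add]
  linear_combination (p:ℚ)^m2 * h1 - (p:ℚ)^m1 * h2

lemma sqrt_irrat (p : ℕ) [Fact p.Prime] (D : ℤ) (hD : ¬ ∃ z : ℤ, z * z = D)
    (α₀ : ℚ_[p]) (hsq : α₀ ^ 2 = (D : ℚ_[p])) (q : ℚ) : (q : ℚ_[p]) ≠ α₀ := by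
  intro h
  have h2 : ((q^2 : ℚ) : ℚ_[p]) = (((D:ℚ)) : ℚ_[p]) := by push_cast; rw [h, hsq]
  have h3 : q^2 = (D:ℚ) := by exact_mod_cast h2
  have hden : q.den = 1 := by
    have : (q^2).den = 1 := by rw [h3]; exact Rat.den_intCast D
    rw [Rat.den_pow] at this
    nlinarith [q.pos]
  have hq : (q.num : ℚ) = q := by
    conv_rhs => rw [← Rat.num_div_den q]
    rw [hden]; simp
  apply hD
  refine ⟨q.num, ?_⟩
  have h4 : (q.num : ℚ)^2 = (D:ℚ) := by rw [hq]; exact h3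
  have h5 : q.num^2 = D := by exact_mod_cast h4
  nlinarith [h5]

/-- If `D` is a nonsquare integer, `α₀² = D` in `ℚ_p`, and the Browkin II
expansion of `α₀` is periodic, then the pre-period (the least `h` admitting a
period `k ≥ 1` valid from index `h` on) has length either `1` or even. -/
theorem stmt_17 (p : ℕ) [Fact p.Prime] (hp : p ≠ 2) (D : ℤ)
    (hD : ¬ ∃ z : ℤ, z * z = D)
    (α₀ : ℚ_[p]) (hsq : α₀ ^ 2 = (D : ℚ_[p]))
    (α : ℕ → ℚ_[p]) (b : ℕ → ℚ) (h0 : α 0 = α₀) (halg : Alg2 p α b)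
    (hper : ∃ h k : ℕ, 1 ≤ k ∧ ∀ n, h ≤ n → b (n + k) = b n) :
    sInf {h : ℕ | ∃ k : ℕ, 1 ≤ k ∧ ∀ n, h ≤ n → b (n + k) = b n} = 1 ∨
      Even (sInf {h : ℕ | ∃ k : ℕ, 1 ≤ k ∧ ∀ n, h ≤ n → b (n + k) = b n}) := by
  obtain ⟨hev, hod, hrec⟩ := halg
  have hpP : p.Prime := Fact.out
  have hp1 : (1:ℝ) < p := by exact_mod_cast hpP.one_lt
  have hp0 : (0:ℝ) < p := lt_trans one_pos hp1
  have hirr0 : ∀ q : ℚ, (q:ℚ_[p]) ≠ α₀ := sqrt_irrat p D hD α₀ hsq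
  -- conjugate sequence
  let γ : ℕ → ℚ_[p] := fun n => Nat.rec (-α₀) (fun m g => (g - ((b m : ℚ) : ℚ_[p]))⁻¹) n
  have hγ0 : γ 0 = -α₀ := rfl
  have hγs : ∀ n, γ (n+1) = (γ n - (b n : ℚ_[p]))⁻¹ := fun n => rfl
  -- conjugate coordinates
  have hconj : ∀ n, ∃ x y : ℚ, y ≠ 0 ∧ α n = (x:ℚ_[p]) + (y:ℚ_[p]) * α₀ ∧
      γ n = (x:ℚ_[p]) - (y:ℚ_[p]) * α₀ := by
    intro n
    induction n with
    | zero => exact ⟨0, 1, one_ne_zero, by simp [h0], by simp [hγ0]⟩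
    | succ n ih =>
      obtain ⟨x, y, hy, hax, hgx⟩ := ih
      set u : ℚ := x - b n with hu
      have hyc : ((y:ℚ):ℚ_[p]) ≠ 0 := by exact_mod_cast hy
      have hu1 : α n - (b n : ℚ_[p]) = (u:ℚ_[p]) + (y:ℚ_[p]) * α₀ := by
        rw [hax, hu]; push_cast; ring
      have hu2 : γ n - (b n : ℚ_[p]) = (u:ℚ_[p]) - (y:ℚ_[p]) * α₀ := by
        rw [hgx, hu]; push_cast; ring
      have h1 : (u:ℚ_[p]) + (y:ℚ_[p]) * α₀ ≠ 0 := by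
        intro hc
        apply hirr0 (-u / y)
        push_cast
        field_simp
        linear_combination -hc
      have h2 : (u:ℚ_[p]) - (y:ℚ_[p]) * α₀ ≠ 0 := by
        intro hc
        apply hirr0 (u / y)
        push_cast
        field_simp
        linear_combination hc
      set N : ℚ := u^2 - y^2 * (D:ℚ) with hNdef
      have hN : ((N:ℚ):ℚ_[p]) = ((u:ℚ_[p]) + (y:ℚ_[p]) * α₀) * ((u:ℚ_[p]) - (y:ℚ_[p]) * α₀) := by
        rw [hNdef]; push_cast
        linear_combination (((y:ℚ):ℚ_[p])^2) * hsq
      have hN0 : ((N:ℚ):ℚ_[p]) ≠ 0 := by rw [hN]; exact mul_ne_zero h1 h2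
      have hN0' : N ≠ 0 := by exact_mod_cast hN0
      refine ⟨u / N, -y / N, by simp [hy, hN0'], ?_, ?_⟩
      · rw [hrec n, hu1]
        have hthis : ((u/N : ℚ):ℚ_[p]) + ((-y/N : ℚ):ℚ_[p]) * α₀
            = ((u:ℚ_[p]) - (y:ℚ_[p]) * α₀) * ((N:ℚ):ℚ_[p])⁻¹ := by
          push_cast; field_simp; try ring
        rw [hthis]
        symm
        apply eq_inv_of_mul_eq_one_left
        rw [mul_comm ((u:ℚ_[p]) - (y:ℚ_[p]) * α₀) (((N:ℚ):ℚ_[p])⁻¹), mul_assoc,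
          mul_comm (((u:ℚ_[p]) - (y:ℚ_[p]) * α₀)) ((u:ℚ_[p]) + (y:ℚ_[p]) * α₀), ← hN]
        rw [inv_mul_cancel₀ hN0]
      · rw [hγs n, hu2]
        have hthis : ((u/N : ℚ):ℚ_[p]) - ((-y/N : ℚ):ℚ_[p]) * α₀
            = ((u:ℚ_[p]) + (y:ℚ_[p]) * α₀) * ((N:ℚ):ℚ_[p])⁻¹ := by
          push_cast; field_simp; try ring
        rw [hthis]
        symm
        apply eq_inv_of_mul_eq_one_left
        rw [mul_comm ((u:ℚ_[p]) + (y:ℚ_[p]) * α₀) (((N:ℚ):ℚ_[p])⁻¹), mul_assoc, ← hN]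
        rw [inv_mul_cancel₀ hN0]
  
  have hirr : ∀ n (q : ℚ), (q:ℚ_[p]) ≠ α n := by
    intro n q hq
    obtain ⟨x, y, hy, hax, _⟩ := hconj n
    have hyc : ((y:ℚ):ℚ_[p]) ≠ 0 := by exact_mod_cast hy
    apply hirr0 ((q - x)/y)
    have h2 : (q:ℚ_[p]) = (x:ℚ_[p]) + (y:ℚ_[p]) * α₀ := hq.trans hax
    push_cast
    field_simp
    linear_combination h2
  have hne : ∀ n, α n - (b n : ℚ_[p]) ≠ 0 := fun n h =>
    hirr n (b n) (sub_eq_zero.mp h).symm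
  have hdisc : ∀ x : ℚ_[p], ‖x‖ < 1 → ‖x‖ ≤ (p:ℝ)⁻¹ := by
    intro x hx
    have := (Padic.norm_le_pow_iff_norm_lt_pow_add_one x (-1)).2 (by simpa using hx)
    simpa using this
  have hmax : ∀ x y : ℚ_[p], ‖y‖ < ‖x‖ → ‖x + y‖ = ‖x‖ := by
    intro x y hxy
    rw [Padic.add_eq_max_of_ne (ne_of_lt hxy).symm]
    exact max_eq_left (le_of_lt hxy)
  have F2e : ∀ n, Even n → ‖α n - (b n:ℚ_[p])‖ ≤ (p:ℝ)⁻¹ := fun n hn => hdisc _ (hev n hn).2.2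
  have F3o : ∀ n, Odd n → (p:ℝ) ≤ ‖α n‖ := by
    intro n hn
    obtain ⟨m, rfl⟩ := hn
    rw [hrec, norm_inv]
    have h1 := F2e (2*m) (even_two_mul m)
    have h2 : (0:ℝ) < ‖α (2*m) - (b (2*m):ℚ_[p])‖ := norm_pos_iff.2 (hne (2*m))
    calc (p:ℝ) = ((p:ℝ)⁻¹)⁻¹ := (inv_inv _).symm
      _ ≤ _ := by
        apply inv_anti₀ h2 h1
  have F2o : ∀ n, Odd n → ‖α n - (b n:ℚ_[p])‖ = 1 := by
    intro n hn
    obtain ⟨c, ⟨hcf, hcabs, hcnorm⟩, hcase⟩ := hod n hn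
    rcases hcase with ⟨he, hb⟩ | ⟨hlt, hb⟩
    · rw [hb]; exact he
    · have hα := F3o n hn
      have hc0 : c ≠ 0 := by
        intro h
        rw [h] at hlt
        simp at hlt
        linarith
      have he1 : (if 0 < c then (1:ℚ) else if c < 0 then -1 else 0) = 1 ∨
          (if 0 < c then (1:ℚ) else if c < 0 then -1 else 0) = -1 := by
        rcases lt_trichotomy 0 c with h|h|h
        · left; simp [h]
        · exact absurd h.symm hc0
        · right; rw [if_neg (by linarith), if_pos h]
      have hee : ‖(((if 0 < c then (1:ℚ) else if c < 0 then -1 else 0):ℚ):ℚ_[p])‖ = 1 := by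
        rcases he1 with h|h <;> rw [h] <;> simp
      have hsplit : α n - (b n:ℚ_[p]) =
          (((if 0 < c then (1:ℚ) else if c < 0 then -1 else 0):ℚ):ℚ_[p]) + (α n - (c:ℚ_[p])) := by
        rw [hb]; push_cast; ring
      rw [hsplit, hmax _ _ (by rw [hee]; exact hlt), hee]
  have F3e : ∀ n, Odd n → ‖α (n+1)‖ = 1 := by
    intro n hn; rw [hrec, norm_inv, F2o n hn, inv_one]
  have F4o : ∀ n, Odd n → (p:ℝ) ≤ ‖((b n:ℚ):ℚ_[p])‖ := by
    intro n hn
    have h1 : ((b n:ℚ):ℚ_[p]) = α n + (-(α n - (b n:ℚ_[p]))) := by ring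
    rw [h1, hmax _ _ (by rw [norm_neg, F2o n hn]; exact lt_of_lt_of_le hp1 (F3o n hn))]
    exact F3o n hn
  have F4e : ∀ n, Odd n → ‖((b (n+1):ℚ):ℚ_[p])‖ = 1 := by
    intro n hn
    have h1 : ((b (n+1):ℚ):ℚ_[p]) = α (n+1) + (-(α (n+1) - (b (n+1):ℚ_[p]))) := by ring
    rw [h1, hmax _ _ ?_, F3e n hn]
    rw [norm_neg, F3e n hn]
    exact lt_of_le_of_lt (F2e (n+1) (Odd.add_one hn)) (inv_lt_one_of_one_lt₀ hp1)
  
  -- basic constants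
  have hα0le : ‖α₀‖ ≤ 1 := by
    have h1 : ‖α₀‖^2 = ‖((D:ℤ):ℚ_[p])‖ := by rw [← norm_pow, hsq]
    nlinarith [Padic.norm_int_le_one (p:=p) D, norm_nonneg α₀]
  have h2norm : ‖((2:ℤ):ℚ_[p])‖ = 1 := by
    have hle := Padic.norm_int_le_one (p:=p) 2
    have hnd : ¬((p:ℤ) ∣ 2) := by
      intro hdvd
      have h1 : (p:ℤ) ≤ 2 := Int.le_of_dvd (by norm_num) hdvd
      have h2 : (2:ℕ) ≤ p := hpP.two_le
      have h3 : p ≤ 2 := by exact_mod_cast h1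
      omega
    have := (Padic.norm_intCast_lt_one_iff (p:=p) (k:=2))
    rcases lt_or_eq_of_le hle with h|h
    · exact absurd (this.1 h) hnd
    · exact h
  -- the set
  set S : Set ℕ := {h : ℕ | ∃ k : ℕ, 1 ≤ k ∧ ∀ n, h ≤ n → b (n + k) = b n} with hSdef
  have hSne : S.Nonempty := by
    obtain ⟨h', k', hk', hp'⟩ := hper
    exact ⟨h', k', hk', hp'⟩
  by_contra hcon
  push_neg at hcon
  obtain ⟨hne1, hnev⟩ := hcon
  have hoddInf : Odd (sInf S) := Nat.not_even_iff_odd.1 hnev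
  obtain ⟨j, hj⟩ := hoddInf
  have hj1 : 1 ≤ j := by
    rcases Nat.eq_zero_or_pos j with h|h
    · exfalso; apply hne1; omega
    · exact h
  obtain ⟨k, hk1, hkp⟩ := Nat.sInf_mem hSne
  -- the period is even
  have hkeven : Even k := by
    by_contra hko
    have hkodd : Odd k := Nat.not_even_iff_odd.1 hko
    have hbn : ‖((b (2*(sInf S)+2):ℚ):ℚ_[p])‖ = 1 := by
      have := F4e (2*(sInf S)+1) ⟨sInf S, rfl⟩
      rwa [show 2*(sInf S)+1+1 = 2*(sInf S)+2 from by ring] at this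
    have hevn : Even (2*(sInf S)+2) := ⟨sInf S + 1, by ring⟩
    have hnk : Odd (2*(sInf S)+2 + k) := hevn.add_odd hkodd
    have h2 := F4o _ hnk
    rw [hkp _ (by omega), hbn] at h2
    linarith
  -- step formula for the difference sequence
  have hstep : ∀ n, 2*j+1 ≤ n → α (n+1) - α (n+1+k) =
      -(α n - α (n+k)) * ((α n - (b n:ℚ_[p])) * (α (n+k) - (b (n+k):ℚ_[p])))⁻¹ := by
    intro n hn
    have e2 : α (n+1+k) = (α (n+k) - (b (n+k):ℚ_[p]))⁻¹ := by
      rw [show n+1+k = (n+k)+1 from by ring]; exact hrec (n+k)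
    have hbk : ((b (n+k):ℚ):ℚ_[p]) = ((b n:ℚ):ℚ_[p]) := by rw [hkp n (by omega)]
    have ha := hne n
    have hc := hne (n+k)
    rw [hrec n, e2]
    rw [hbk] at hc ⊢
    field_simp
    try ring
  have hnormstep : ∀ n, 2*j+1 ≤ n → ‖α (n+1) - α (n+1+k)‖ =
      ‖α n - α (n+k)‖ * (‖α n - (b n:ℚ_[p])‖ * ‖α (n+k) - (b (n+k):ℚ_[p])‖)⁻¹ := by
    intro n hn
    rw [hstep n hn, norm_mul, norm_neg, norm_inv, norm_mul]
  -- growth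
  have hgrow : ∀ m, (p:ℝ)^(2*m) * ‖α (2*j+2) - α (2*j+2+k)‖ ≤
      ‖α (2*j+2+2*m) - α (2*j+2+2*m+k)‖ := by
    intro m
    induction m with
    | zero => simp
    | succ m ih =>
      have hevn : Even (2*j+2+2*m) := ⟨j+1+m, by ring⟩
      have hevnk : Even (2*j+2+2*m+k) := hevn.add hkeven
      have ha1 := F2e _ hevn
      have ha2 := F2e _ hevnk
      have hpa : 0 < ‖α (2*j+2+2*m) - (b (2*j+2+2*m):ℚ_[p])‖ := norm_pos_iff.2 (hne _)
      have hpc : 0 < ‖α (2*j+2+2*m+k) - (b (2*j+2+2*m+k):ℚ_[p])‖ := norm_pos_iff.2 (hne _)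
      have hs1 := hnormstep (2*j+2+2*m) (by omega)
      have hs2 := hnormstep (2*j+2+2*m+1) (by omega)
      have hinv1 : (p:ℝ)^2 ≤ (‖α (2*j+2+2*m) - (b (2*j+2+2*m):ℚ_[p])‖ *
          ‖α (2*j+2+2*m+k) - (b (2*j+2+2*m+k):ℚ_[p])‖)⁻¹ := by
        have hmm : ‖α (2*j+2+2*m) - (b (2*j+2+2*m):ℚ_[p])‖ *
            ‖α (2*j+2+2*m+k) - (b (2*j+2+2*m+k):ℚ_[p])‖ ≤ (p:ℝ)⁻¹ * (p:ℝ)⁻¹ :=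
          mul_le_mul ha1 ha2 (le_of_lt hpc) (by positivity)
        have := inv_anti₀ (mul_pos hpa hpc) hmm
        calc (p:ℝ)^2 = ((p:ℝ)⁻¹ * (p:ℝ)⁻¹)⁻¹ := by
              rw [← mul_inv, inv_inv]; ring
          _ ≤ _ := this
      have hstep1 : (p:ℝ)^2 * ‖α (2*j+2+2*m) - α (2*j+2+2*m+k)‖ ≤
          ‖α (2*j+2+2*m+1) - α (2*j+2+2*m+1+k)‖ := by
        rw [hs1, mul_comm]
        exact mul_le_mul_of_nonneg_left hinv1 (norm_nonneg _)
      have ho1 : Odd (2*j+2+2*m+1) := ⟨j+1+m, by ring⟩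
      have heq1 : ‖α (2*j+2+2*m+1+1) - α (2*j+2+2*m+1+1+k)‖ =
          ‖α (2*j+2+2*m+1) - α (2*j+2+2*m+1+k)‖ := by
        rw [hs2, F2o _ ho1, F2o _ (ho1.add_even hkeven)]
        simp
      rw [show 2*j+2+2*(m+1) = 2*j+2+2*m+1+1 from by ring]
      calc (p:ℝ)^(2*(m+1)) * ‖α (2*j+2) - α (2*j+2+k)‖
          = (p:ℝ)^2 * ((p:ℝ)^(2*m) * ‖α (2*j+2) - α (2*j+2+k)‖) := by
            rw [show 2*(m+1) = 2*m+2 from by ring, pow_add]; ring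
        _ ≤ (p:ℝ)^2 * ‖α (2*j+2+2*m) - α (2*j+2+2*m+k)‖ :=
            mul_le_mul_of_nonneg_left ih (by positivity)
        _ ≤ ‖α (2*j+2+2*m+1) - α (2*j+2+2*m+1+k)‖ := hstep1
        _ = ‖α (2*j+2+2*m+1+1) - α (2*j+2+2*m+1+1+k)‖ := heq1.symm
  -- boundedness
  have hbound : ∀ m, ‖α (2*j+2+2*m) - α (2*j+2+2*m+k)‖ ≤ 1 := by
    intro m
    have o1 : Odd (2*j+1+2*m) := ⟨j+m, by ring⟩
    have h1 : ‖α (2*j+2+2*m)‖ = 1 := by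
      have := F3e _ o1
      rwa [show 2*j+1+2*m+1 = 2*j+2+2*m from by ring] at this
    have o2 : Odd (2*j+1+2*m+k) := o1.add_even hkeven
    have h2 : ‖α (2*j+2+2*m+k)‖ = 1 := by
      have := F3e _ o2
      rwa [show 2*j+1+2*m+k+1 = 2*j+2+2*m+k from by ring] at this
    calc ‖α (2*j+2+2*m) - α (2*j+2+2*m+k)‖
        = ‖α (2*j+2+2*m) + (-(α (2*j+2+2*m+k)))‖ := by rw [sub_eq_add_neg]
      _ ≤ max ‖α (2*j+2+2*m)‖ ‖-(α (2*j+2+2*m+k))‖ := Padic.nonarchimedean _ _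
      _ ≤ 1 := by rw [norm_neg, h1, h2]; simp
  -- α is periodic from 2j+1 on
  have hα_eq : α (2*j+1+k) = α (2*j+1) := by
    by_contra hne0
    have hb0 : α (2*j+1) - α (2*j+1+k) ≠ 0 := sub_ne_zero.2 (fun e => hne0 e.symm)
    have hb1 : α (2*j+2) - α (2*j+2+k) ≠ 0 := by
      have hs := hstep (2*j+1) (le_refl _)
      rw [show 2*j+1+1 = 2*j+2 from by ring] at hs
      rw [hs]
      exact mul_ne_zero (neg_ne_zero.2 hb0)
        (inv_ne_zero (mul_ne_zero (hne _) (hne _)))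
    have hpos : 0 < ‖α (2*j+2) - α (2*j+2+k)‖ := norm_pos_iff.2 hb1
    have hp2 : (1:ℝ) < (p:ℝ)^2 := by nlinarith
    obtain ⟨m, hm⟩ := pow_unbounded_of_one_lt (‖α (2*j+2) - α (2*j+2+k)‖⁻¹) hp2
    have h1 : 1 < (p:ℝ)^(2*m) * ‖α (2*j+2) - α (2*j+2+k)‖ := by
      rw [pow_mul]
      calc (1:ℝ) = ‖α (2*j+2) - α (2*j+2+k)‖⁻¹ * ‖α (2*j+2) - α (2*j+2+k)‖ :=
            (inv_mul_cancel₀ (ne_of_gt hpos)).symm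
        _ < ((p:ℝ)^2)^m * ‖α (2*j+2) - α (2*j+2+k)‖ :=
            mul_lt_mul_of_pos_right hm hpos
    linarith [hgrow m, hbound m]
  -- conjugate parity facts
  have Pγ : ∀ m, (p:ℝ) ≤ ‖γ (2*m+1) - ((b (2*m+1):ℚ):ℚ_[p])‖ := by
    intro m
    induction m with
    | zero =>
      show (p:ℝ) ≤ ‖γ 1 - ((b 1:ℚ):ℚ_[p])‖
      obtain ⟨hf0, habs0, hn0⟩ := hev 0 Even.zero
      rw [h0] at hn0
      have hrec0 : α 1 = (α 0 - ((b 0:ℚ):ℚ_[p]))⁻¹ := hrec 0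
      have hγs0 : γ 1 = (γ 0 - ((b 0:ℚ):ℚ_[p]))⁻¹ := hγs 0
      have hb1 := F4o 1 odd_one
      rcases lt_or_eq_of_le hα0le with hlt | heq
      · have hb0n : ‖((b 0:ℚ):ℚ_[p])‖ < 1 := by
          have hx : ((b 0:ℚ):ℚ_[p]) = α₀ + (-(α₀ - ((b 0:ℚ):ℚ_[p]))) := by ring
          rw [hx]
          calc ‖α₀ + (-(α₀ - ((b 0:ℚ):ℚ_[p])))‖
              ≤ max ‖α₀‖ ‖-(α₀ - ((b 0:ℚ):ℚ_[p]))‖ := Padic.nonarchimedean _ _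
            _ < 1 := max_lt hlt (by rwa [norm_neg])
        have hppQ : (0:ℚ) < p := by exact_mod_cast hpP.pos
        have hb00 : b 0 = 0 := padicFrac_eq_zero p (b 0) hf0 hb0n (by linarith)
        have hα1 : α 1 = α₀⁻¹ := by rw [hrec0, h0, hb00]; simp
        have hγ1 : γ 1 = -(α 1) := by
          rw [hγs0, hγ0, hb00, hα1]
          push_cast
          rw [sub_zero, inv_neg]
        have hsplit : γ 1 - ((b 1:ℚ):ℚ_[p]) =
            -( ((2:ℤ):ℚ_[p]) * ((b 1:ℚ):ℚ_[p]) + (α 1 - ((b 1:ℚ):ℚ_[p]))) := by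
          rw [hγ1]; push_cast; ring
        have h2b : ‖((2:ℤ):ℚ_[p]) * ((b 1:ℚ):ℚ_[p])‖ = ‖((b 1:ℚ):ℚ_[p])‖ := by
          rw [norm_mul, h2norm, one_mul]
        rw [hsplit, norm_neg, hmax _ _ (by rw [F2o 1 odd_one, h2b]; linarith), h2b]
        exact hb1
      · have hb0n : ‖((b 0:ℚ):ℚ_[p])‖ = 1 := by
          have hx : ((b 0:ℚ):ℚ_[p]) = α₀ + (-(α₀ - ((b 0:ℚ):ℚ_[p]))) := by ring
          rw [hx, hmax _ _ (by rw [norm_neg, heq]; exact hn0)]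
          exact heq
        have hγ0b : ‖γ 0 - ((b 0:ℚ):ℚ_[p])‖ = 1 := by
          have hx : γ 0 - ((b 0:ℚ):ℚ_[p]) =
              -( ((2:ℤ):ℚ_[p]) * ((b 0:ℚ):ℚ_[p]) + (α 0 - ((b 0:ℚ):ℚ_[p]))) := by
            rw [hγ0, h0]; push_cast; ring
          have h2b : ‖((2:ℤ):ℚ_[p]) * ((b 0:ℚ):ℚ_[p])‖ = 1 := by
            rw [norm_mul, h2norm, one_mul, hb0n]
          rw [hx, norm_neg, hmax _ _ (by rw [h2b, h0]; exact hn0), h2b]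
        have hγ1n : ‖γ 1‖ = 1 := by rw [hγs0, norm_inv, hγ0b, inv_one]
        have hx : γ 1 - ((b 1:ℚ):ℚ_[p]) = (-((b 1:ℚ):ℚ_[p])) + γ 1 := by ring
        rw [hx, hmax _ _ (by rw [hγ1n, norm_neg]; linarith), norm_neg]
        exact hb1
    | succ m ih =>
      have hg2 : ‖γ (2*m+2)‖ ≤ (p:ℝ)⁻¹ := by
        rw [show 2*m+2 = (2*m+1)+1 from by ring, hγs (2*m+1), norm_inv]
        exact inv_anti₀ hp0 ih
      have hb2 : ‖((b (2*m+2):ℚ):ℚ_[p])‖ = 1 := by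
        have := F4e (2*m+1) ⟨m, rfl⟩
        rwa [show 2*m+1+1 = 2*m+2 from by ring] at this
      have hg2b : ‖γ (2*m+2) - ((b (2*m+2):ℚ):ℚ_[p])‖ = 1 := by
        have hx : γ (2*m+2) - ((b (2*m+2):ℚ):ℚ_[p]) =
            (-((b (2*m+2):ℚ):ℚ_[p])) + γ (2*m+2) := by ring
        rw [hx, hmax _ _ (by
          rw [norm_neg, hb2]
          exact lt_of_le_of_lt hg2 (inv_lt_one_of_one_lt₀ hp1)), norm_neg, hb2]
      have hg3 : ‖γ (2*m+3)‖ = 1 := by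
        rw [show 2*m+3 = (2*m+2)+1 from by ring, hγs (2*m+2), norm_inv, hg2b, inv_one]
      have hb3 := F4o (2*m+3) ⟨m+1, by ring⟩
      have hx : γ (2*m+3) - ((b (2*m+3):ℚ):ℚ_[p]) =
          (-((b (2*m+3):ℚ):ℚ_[p])) + γ (2*m+3) := by ring
      rw [show 2*(m+1)+1 = 2*m+3 from by ring, hx,
        hmax _ _ (by rw [norm_neg, hg3]; linarith), norm_neg]
      exact hb3
  have hγe : ∀ m, ‖γ (2*m+2)‖ ≤ (p:ℝ)⁻¹ := by
    intro m
    rw [show 2*m+2 = (2*m+1)+1 from by ring, hγs (2*m+1), norm_inv]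
    exact inv_anti₀ hp0 (Pγ m)
  -- conjugate periodicity at 2j+1
  have hγper : γ (2*j+1+k) = γ (2*j+1) := by
    obtain ⟨x, y, hy, hax, hgx⟩ := hconj (2*j+1)
    obtain ⟨x', y', hy', hax', hgx'⟩ := hconj (2*j+1+k)
    have heq2 : (x':ℚ_[p]) + (y':ℚ_[p]) * α₀ = (x:ℚ_[p]) + (y:ℚ_[p]) * α₀ := by
      rw [← hax, ← hax']; exact hα_eq
    have hyy : y' = y := by
      by_contra hne'
      apply hirr0 ((x - x')/(y' - y))
      have hyc : ((y' - y :ℚ):ℚ_[p]) ≠ 0 := by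
        exact_mod_cast sub_ne_zero.2 hne'
      push_cast at hyc ⊢
      field_simp
      try linear_combination heq2
      try linear_combination -heq2
    have hxx : (x':ℚ_[p]) = (x:ℚ_[p]) := by
      rw [hyy] at heq2
      exact add_right_cancel heq2
    simp only [hgx, hgx', hxx, hyy]
  -- final contradiction
  have e1 : γ (2*j+1) = (γ (2*j) - ((b (2*j):ℚ):ℚ_[p]))⁻¹ := hγs (2*j)
  have e2 : γ (2*j+1+k) = (γ (2*j+k) - ((b (2*j+k):ℚ):ℚ_[p]))⁻¹ := by
    rw [show 2*j+1+k = (2*j+k)+1 from by ring]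
    try exact hγs (2*j+k)
  have e3 : γ (2*j) - ((b (2*j):ℚ):ℚ_[p]) = γ (2*j+k) - ((b (2*j+k):ℚ):ℚ_[p]) := by
    have h' := hγper
    rw [e1, e2] at h'
    exact (inv_injective h').symm
  have hd : ((b (2*j) - b (2*j+k) :ℚ):ℚ_[p]) = γ (2*j) - γ (2*j+k) := by
    push_cast
    linear_combination -e3
  obtain ⟨k2, hk2⟩ := hkeven
  have hg1 : ‖γ (2*j)‖ ≤ (p:ℝ)⁻¹ := by
    rw [show 2*j = 2*(j-1)+2 from by omega]; exact hγe (j-1)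
  have hg2' : ‖γ (2*j+k)‖ ≤ (p:ℝ)⁻¹ := by
    rw [show 2*j+k = 2*(j+k2-1)+2 from by omega]; exact hγe (j+k2-1)
  have hdn : ‖((b (2*j) - b (2*j+k):ℚ):ℚ_[p])‖ < 1 := by
    rw [hd, sub_eq_add_neg]
    calc ‖γ (2*j) + (-(γ (2*j+k)))‖ ≤ max ‖γ (2*j)‖ ‖-(γ (2*j+k))‖ :=
          Padic.nonarchimedean _ _
      _ ≤ (p:ℝ)⁻¹ := max_le hg1 (by rwa [norm_neg])
      _ < 1 := inv_lt_one_of_one_lt₀ hp1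
  obtain ⟨hfH, habsH, _⟩ := hev (2*j) (even_two_mul j)
  obtain ⟨hfK, habsK, _⟩ := hev (2*j+k) ((even_two_mul j).add ⟨k2, hk2⟩)
  have hdfrac := padicFrac_sub p _ _ hfH hfK
  have hdabs : |b (2*j) - b (2*j+k)| < p := by
    calc |b (2*j) - b (2*j+k)| ≤ |b (2*j)| + |b (2*j+k)| := abs_sub _ _
      _ < p := by linarith
  have hd0 := padicFrac_eq_zero p _ hdfrac hdn hdabs
  have hbH : b (2*j + k) = b (2*j) := (sub_eq_zero.mp hd0).symm
  have hmemH : (2*j) ∈ S := by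
    refine ⟨k, hk1, ?_⟩
    intro n hn
    rcases eq_or_lt_of_le hn with rfl | hlt'
    · exact hbH
    · exact hkp n (by omega)
  have hfin := Nat.sInf_le hmemH
  omega
end

section
/- Let p be an odd prime and let α₀ ∈ ℚ_p be a quadratic irrational with conjugate ᾱ₀, and assume ‖α₀‖_p ≥ 1 and ‖ᾱ₀‖_p < 1. Let (α_n), (b_n) be the sequences produced by Algorithm (3) applied to α₀, and define the conjugate complete quotients by ᾱ_0 = ᾱ₀ and ᾱ_{n+1} = (ᾱ_n − b_n)⁻¹. Then for every n ≥ 0, b_n ≠ 0 and ‖ᾱ_{n+1}‖_p = ‖b_n‖_p⁻¹; in particular, ‖ᾱ_n‖_p ≤ 1 for every odd n and ‖ᾱ_n‖_p < 1 for every even n. -/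
private lemma padic_sub_norm {p : ℕ} [Fact p.Prime] (x y : ℚ_[p]) (h : ‖y‖ < ‖x‖) :
    ‖x - y‖ = ‖x‖ := by
  have hne : ‖x‖ ≠ ‖-y‖ := by rw [norm_neg]; exact h.ne'
  rw [sub_eq_add_neg, Padic.add_eq_max_of_ne hne, norm_neg,
    max_eq_left_of_lt h]

/-- For `α₀` a quadratic irrational with `‖α₀‖_p ≥ 1`, `‖ᾱ₀‖_p < 1`, Algorithm (3)
sequences `(α n)`, `(b n)`, and conjugate complete quotients `β` (with
`β 0 = ᾱ₀ = r - α₀` and `β (n+1) = (β n - b n)⁻¹`): every `b n` is nonzero,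
`‖β (n+1)‖_p = ‖b n‖_p⁻¹`, and `‖β n‖_p ≤ 1` for odd `n`, `‖β n‖_p < 1` for even `n`. -/
theorem stmt_18 (p : ℕ) [Fact p.Prime] (hp : p ≠ 2)
    (α₀ : ℚ_[p]) (hirr : ∀ q : ℚ, α₀ ≠ (q : ℚ_[p]))
    (r s : ℚ) (hquad : α₀ ^ 2 = (r : ℚ_[p]) * α₀ + (s : ℚ_[p]))
    (hn1 : 1 ≤ ‖α₀‖) (hn2 : ‖(r : ℚ_[p]) - α₀‖ < 1)
    (α : ℕ → ℚ_[p]) (b : ℕ → ℚ) (h0 : α 0 = α₀) (halg : Alg3 p α b)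
    (β : ℕ → ℚ_[p]) (hβ0 : β 0 = (r : ℚ_[p]) - α₀)
    (hβ : ∀ n, β (n + 1) = (β n - (b n : ℚ_[p]))⁻¹) :
    (∀ n : ℕ, b n ≠ 0 ∧ ‖β (n + 1)‖ = ‖((b n : ℚ) : ℚ_[p])‖⁻¹) ∧
      (∀ n : ℕ, Odd n → ‖β n‖ ≤ 1) ∧ (∀ n : ℕ, Even n → ‖β n‖ < 1) := by

  obtain ⟨hev, hod, hrec⟩ := halg
  -- The invariant
  have key : ∀ n : ℕ, (∀ q : ℚ, α n ≠ (q : ℚ_[p])) ∧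
      (Even n → ‖β n‖ < 1 ∧ 1 ≤ ‖α n‖) ∧ (¬ Even n → ‖β n‖ ≤ 1 ∧ 1 < ‖α n‖) := by
    intro n
    induction n with
    | zero =>
      refine ⟨by simpa [h0] using hirr, fun _ => ⟨by simpa [hβ0] using hn2,
        by simpa [h0] using hn1⟩, fun h => absurd Even.zero h⟩
    | succ n ih =>
      obtain ⟨hirrn, hevn, hodn⟩ := ih
      have hane : α n - (b n : ℚ_[p]) ≠ 0 := sub_ne_zero.mpr (hirrn (b n))
      have hirr' : ∀ q : ℚ, α (n + 1) ≠ (q : ℚ_[p]) := by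
        intro q hq
        rw [hrec n] at hq
        rcases eq_or_ne q 0 with rfl | hq0
        · exact hane (inv_eq_zero.mp (by simpa using hq))
        · have : α n - (b n : ℚ_[p]) = ((q⁻¹ : ℚ) : ℚ_[p]) := by
            push_cast
            rw [← hq, inv_inv]
          exact hirrn (q⁻¹ + b n) (by
            rw [Rat.cast_inv] at this
            rw [Rat.cast_add, Rat.cast_inv]
            linear_combination this)
      rcases Nat.even_or_odd n with he | ho
      · -- n even, n+1 odd
        obtain ⟨hβn, hαn⟩ := hevn he
        obtain ⟨_, _, hflr⟩ := hev n he
        have hbn : ‖((b n : ℚ) : ℚ_[p])‖ = ‖α n‖ := by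
          have : ‖α n - (α n - (b n : ℚ_[p]))‖ = ‖α n‖ :=
            padic_sub_norm _ _ (lt_of_lt_of_le hflr hαn)
          simpa using this
        have hα1 : 1 < ‖α (n + 1)‖ := by
          rw [hrec n, norm_inv]
          exact (one_lt_inv₀ (norm_pos_iff.mpr hane)).mpr hflr
        have hββ : ‖β n - ((b n : ℚ) : ℚ_[p])‖ = ‖((b n : ℚ) : ℚ_[p])‖ := by
          rw [norm_sub_rev]
          exact padic_sub_norm _ _ (by rw [hbn]; exact lt_of_lt_of_le hβn hαn)
        have hβ1 : ‖β (n + 1)‖ ≤ 1 := by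
          rw [hβ n, norm_inv, hββ, hbn]
          exact inv_le_one_of_one_le₀ hαn
        refine ⟨hirr', fun h => absurd (Nat.not_even_iff_odd.mp
          (by simpa using Nat.even_add_one.mp h)) (by simp [he, Nat.not_even_iff_odd]),
          fun _ => ⟨hβ1, hα1⟩⟩
      · -- n odd, n+1 even
        obtain ⟨hβn, hαn⟩ := hodn (Nat.not_even_iff_odd.mpr ho)
        obtain ⟨_, _, hflr⟩ := hod n ho
        have hbn : ‖((b n : ℚ) : ℚ_[p])‖ = ‖α n‖ := by
          have : ‖α n - (α n - (b n : ℚ_[p]))‖ = ‖α n‖ :=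
            padic_sub_norm _ _ (lt_of_le_of_lt hflr hαn)
          simpa using this
        have hα1 : 1 ≤ ‖α (n + 1)‖ := by
          rw [hrec n, norm_inv]
          exact (one_le_inv₀ (norm_pos_iff.mpr hane)).mpr hflr
        have hββ : ‖β n - ((b n : ℚ) : ℚ_[p])‖ = ‖((b n : ℚ) : ℚ_[p])‖ := by
          rw [norm_sub_rev]
          exact padic_sub_norm _ _ (by rw [hbn]; exact lt_of_le_of_lt hβn hαn)
        have hβ1 : ‖β (n + 1)‖ < 1 := by
          rw [hβ n, norm_inv, hββ, hbn]
          exact inv_lt_one_of_one_lt₀ hαn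
        refine ⟨hirr', fun _ => ⟨hβ1, hα1⟩, fun h =>
          absurd (Nat.even_add_one.mpr (Nat.not_even_iff_odd.mpr ho)) h⟩
  -- now conclude
  have main : ∀ n : ℕ, b n ≠ 0 ∧ ‖β (n + 1)‖ = ‖((b n : ℚ) : ℚ_[p])‖⁻¹ := by
    intro n
    obtain ⟨hirrn, hevn, hodn⟩ := key n
    have h1 : 1 ≤ ‖((b n : ℚ) : ℚ_[p])‖ ∧ ‖β n‖ < ‖((b n : ℚ) : ℚ_[p])‖ := by
      rcases Nat.even_or_odd n with he | ho
      · obtain ⟨hβn, hαn⟩ := hevn he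
        obtain ⟨_, _, hflr⟩ := hev n he
        have hbn : ‖((b n : ℚ) : ℚ_[p])‖ = ‖α n‖ := by
          have : ‖α n - (α n - (b n : ℚ_[p]))‖ = ‖α n‖ :=
            padic_sub_norm _ _ (lt_of_lt_of_le hflr hαn)
          simpa using this
        exact ⟨by rw [hbn]; exact hαn, by rw [hbn]; exact lt_of_lt_of_le hβn hαn⟩
      · obtain ⟨hβn, hαn⟩ := hodn (Nat.not_even_iff_odd.mpr ho)
        obtain ⟨_, _, hflr⟩ := hod n ho
        have hbn : ‖((b n : ℚ) : ℚ_[p])‖ = ‖α n‖ := by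
          have : ‖α n - (α n - (b n : ℚ_[p]))‖ = ‖α n‖ :=
            padic_sub_norm _ _ (lt_of_le_of_lt hflr hαn)
          simpa using this
        exact ⟨by rw [hbn]; exact le_of_lt hαn, by rw [hbn]; exact lt_of_le_of_lt hβn hαn⟩
    obtain ⟨hb1, hβb⟩ := h1
    have hbne : b n ≠ 0 := by
      intro h
      rw [h] at hb1
      simp at hb1
      linarith
    refine ⟨hbne, ?_⟩
    rw [hβ n, norm_inv, norm_sub_rev, padic_sub_norm _ _ hβb]
  refine ⟨main, fun n hn => ?_, fun n hn => ((key n).2.1 hn).1⟩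
  exact ((key n).2.2 (Nat.not_even_iff_odd.mpr hn)).1
end
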